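/- arXiv:1503.05407 — 9 statements merged into one kernel-verified Lean document; each statement's English description precedes it below -/
import Mathlib

section
/- Let α ∈ (0,1], M > 0, r > 0 and let C₀, C₁ > 0. Define C_k for k ≥ 2 by α²(k+2)(k+1)C_{k+2} = (M/r^{kα}) ∑_{j=0}^{k} [α(j+1)C_{j+1} + C_j] r^{jα} + M C_{k+1} r^{α} for k ≥ 0. Then for every real t with 0 < t < r, the series ∑_{k=0}^{∞} C_k t^{kα} converges. -/
open Finset

set_option maxHeartbeats 1600000

theorem stmt_1 (α M r : ℝ) (hα : α ∈ Set.Ioc (0:ℝ) 1) (hM : 0 < M) (hr : 0 < r)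
    (C : ℕ → ℝ) (hC0 : 0 < C 0) (hC1 : 0 < C 1)
    (hrec : ∀ k : ℕ, α ^ 2 * ((k : ℝ) + 2) * ((k : ℝ) + 1) * C (k + 2)
      = M / r ^ ((k : ℝ) * α) *
          ∑ j ∈ Finset.range (k + 1),
            (α * ((j : ℝ) + 1) * C (j + 1) + C j) * r ^ ((j : ℝ) * α)
        + M * C (k + 1) * r ^ α) :
    ∀ t : ℝ, 0 < t → t < r →
      Summable (fun k : ℕ => C k * t ^ ((k : ℝ) * α)) := by
  obtain ⟨hα0, hα1⟩ := hα
  have hrpow : ∀ y : ℝ, (0:ℝ) < r ^ y := fun y => Real.rpow_pos_of_pos hr y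
  -- positivity of all C k
  have hpos : ∀ k, 0 < C k := by
    have H : ∀ k, ∀ j, j ≤ k + 1 → 0 < C j := by
      intro k
      induction k with
      | zero =>
        intro j hj
        interval_cases j
        · exact hC0
        · exact hC1
      | succ n ihn =>
        intro j hj
        rcases Nat.lt_or_ge j (n + 2) with h | h
        · exact ihn j (by omega)
        · have hj2 : j = n + 2 := by omega
          subst hj2
          have h := hrec n
          have hsum : 0 < ∑ j ∈ Finset.range (n + 1),
              (α * ((j : ℝ) + 1) * C (j + 1) + C j) * r ^ ((j : ℝ) * α) := by
            apply Finset.sum_pos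
            · intro j hjm
              have hjn : j < n + 1 := Finset.mem_range.mp hjm
              have h1 : 0 < C (j + 1) := ihn (j + 1) (by omega)
              have h0 : 0 < C j := ihn j (by omega)
              have h2 := hrpow ((j : ℝ) * α)
              have h3 : (0:ℝ) < (j:ℝ) + 1 := by positivity
              have : 0 < α * ((j : ℝ) + 1) * C (j + 1) + C j := by positivity
              exact mul_pos this h2
            · exact ⟨0, Finset.mem_range.mpr (by omega)⟩
          have h1 : 0 < C (n + 1) := ihn (n + 1) le_rfl
          have hR : 0 < M / r ^ ((n : ℝ) * α) * ∑ j ∈ Finset.range (n + 1),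
              (α * ((j : ℝ) + 1) * C (j + 1) + C j) * r ^ ((j : ℝ) * α)
              + M * C (n + 1) * r ^ α :=
            add_pos (mul_pos (div_pos hM (hrpow _)) hsum)
              (mul_pos (mul_pos hM h1) (hrpow α))
          have hco : (0:ℝ) < α ^ 2 * ((n : ℝ) + 2) * ((n : ℝ) + 1) := by positivity
          nlinarith [h, hR, hco]
    intro k; exact H k k (by omega)
  intro t ht htr
  have hq0 : (0:ℝ) < (t / r) ^ α := Real.rpow_pos_of_pos (div_pos ht hr) α
  have hq1 : (t / r) ^ α < 1 :=
    Real.rpow_lt_one (div_pos ht hr).le ((div_lt_one hr).mpr htr) hα0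
  set q : ℝ := (t / r) ^ α with hqdef
  set ρ : ℝ := (1 + 1 / q) / 2 with hρdef
  have hinvq : 1 < 1 / q := one_lt_one_div hq0 hq1
  have hρ1 : 1 < ρ := by rw [hρdef]; linarith
  have hρ0 : (0:ℝ) < ρ := by linarith
  have hρq : ρ * q < 1 := by
    have hqq : ρ * q = (q + 1) / 2 := by
      rw [hρdef]; field_simp
    rw [hqq]; linarith
  set x : ℝ := r ^ α with hxdef
  have hx : (0:ℝ) < x := hrpow α
  have hs : (0:ℝ) < ρ - 1 := by linarith
  obtain ⟨N, hN⟩ := exists_nat_ge (2*M*x/(α*(ρ-1)) + 2*M*x^2/(α^2*(ρ-1)))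
  have hne : (Finset.range (N + 2)).Nonempty := ⟨0, Finset.mem_range.mpr (by omega)⟩
  set A : ℝ := (Finset.range (N + 2)).sup' hne (fun k => C k * r ^ ((k:ℝ) * α) / ρ ^ k)
    with hAdef
  have hA0 : 0 < A := by
    have h0 := Finset.le_sup' (fun k => C k * r ^ ((k:ℝ) * α) / ρ ^ k)
      (Finset.mem_range.mpr (show 0 < N + 2 by omega))
    simp only [Nat.cast_zero, zero_mul, Real.rpow_zero, mul_one, pow_zero, div_one] at h0
    exact lt_of_lt_of_le hC0 h0
  -- the key bound
  have key : ∀ k, C k * r ^ ((k:ℝ) * α) ≤ A * ρ ^ k := by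
    have H : ∀ k, ∀ j, j ≤ k + 1 → C j * r ^ ((j:ℝ) * α) ≤ A * ρ ^ j := by
      intro k
      have supbd : ∀ j, j < N + 2 → C j * r ^ ((j:ℝ) * α) ≤ A * ρ ^ j := by
        intro j hjN
        have h0 := Finset.le_sup' (fun k => C k * r ^ ((k:ℝ) * α) / ρ ^ k)
          (Finset.mem_range.mpr hjN)
        have hp : (0:ℝ) < ρ ^ j := pow_pos hρ0 j
        calc C j * r ^ ((j:ℝ) * α) = C j * r ^ ((j:ℝ) * α) / ρ ^ j * ρ ^ j := by
              field_simp
          _ ≤ A * ρ ^ j := mul_le_mul_of_nonneg_right h0 hp.le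
      induction k with
      | zero =>
        intro j hj
        exact supbd j (by omega)
      | succ n ihn =>
        intro j hj
        rcases Nat.lt_or_ge j (n + 2) with hlt | hge
        · exact ihn j (by omega)
        · have hj2 : j = n + 2 := by omega
          subst hj2
          by_cases hn : n + 2 < N + 2
          · exact supbd _ hn
          · push_neg at hn
            have hm : N ≤ n := by omega
            have hmR : 2*M*x/(α*(ρ-1)) + 2*M*x^2/(α^2*(ρ-1)) ≤ (n:ℝ) :=
              le_trans hN (by exact_mod_cast Nat.cast_le.mpr hm)
            have hB1 : 2*M*x ≤ α*(ρ-1)*((n:ℝ)+2) := by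
              have h1 : 2*M*x/(α*(ρ-1)) ≤ (n:ℝ)+2 := by
                have h2 : 0 ≤ 2*M*x^2/(α^2*(ρ-1)) := by positivity
                linarith
              calc 2*M*x = 2*M*x/(α*(ρ-1)) * (α*(ρ-1)) := by field_simp
                _ ≤ ((n:ℝ)+2) * (α*(ρ-1)) := mul_le_mul_of_nonneg_right h1 (by positivity)
                _ = α*(ρ-1)*((n:ℝ)+2) := by ring
            have hB2 : 2*M*x^2 ≤ α^2*(ρ-1)*((n:ℝ)+1) := by
              have h1 : 2*M*x^2/(α^2*(ρ-1)) ≤ (n:ℝ)+1 := by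
                have h2 : 0 ≤ 2*M*x/(α*(ρ-1)) := by positivity
                linarith
              calc 2*M*x^2 = 2*M*x^2/(α^2*(ρ-1)) * (α^2*(ρ-1)) := by field_simp
                _ ≤ ((n:ℝ)+1) * (α^2*(ρ-1)) := mul_le_mul_of_nonneg_right h1 (by positivity)
                _ = α^2*(ρ-1)*((n:ℝ)+1) := by ring
            have h := hrec n
            set S : ℝ := ∑ j ∈ Finset.range (n + 1),
              (α * ((j : ℝ) + 1) * C (j + 1) + C j) * r ^ ((j : ℝ) * α) with hSdef
            set G : ℝ := ∑ j ∈ Finset.range (n + 1), ρ ^ j with hGdef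
            -- per-term bound
            have hterm : ∀ j ∈ Finset.range (n + 1),
                x * ((α * ((j:ℝ) + 1) * C (j + 1) + C j) * r ^ ((j:ℝ) * α))
                ≤ (α * ((n:ℝ) + 1) * A * ρ + A * x) * ρ ^ j := by
              intro j hjmem
              have hjn : j ≤ n := by
                have := Finset.mem_range.mp hjmem; omega
              have ih1 := ihn (j + 1) (by omega)
              have ih0 := ihn j (by omega)
              push_cast at ih1
              have e1 : r ^ (((j:ℝ) + 1) * α) = r ^ ((j:ℝ) * α) * x := by
                rw [hxdef, show ((j:ℝ)+1)*α = (j:ℝ)*α + α by ring, Real.rpow_add hr]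
              rw [e1] at ih1
              have hjn' : (j:ℝ) ≤ (n:ℝ) := by exact_mod_cast hjn
              have hc1 : 0 ≤ C (j + 1) * (r ^ ((j:ℝ) * α) * x) :=
                (mul_pos (hpos _) (mul_pos (hrpow _) hx)).le
              have hle : α * ((j:ℝ) + 1) ≤ α * ((n:ℝ) + 1) := by nlinarith
              have t1 : α * ((j:ℝ) + 1) * (C (j + 1) * (r ^ ((j:ℝ) * α) * x))
                  ≤ α * ((n:ℝ) + 1) * (A * ρ ^ (j + 1)) :=
                mul_le_mul hle ih1 hc1 (by positivity)
              have t2 : x * (C j * r ^ ((j:ℝ) * α)) ≤ x * (A * ρ ^ j) :=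
                mul_le_mul_of_nonneg_left ih0 hx.le
              rw [pow_succ] at t1
              nlinarith [t1, t2]
            have hxS : x * S ≤ (α * ((n:ℝ) + 1) * A * ρ + A * x) * G := by
              rw [hSdef, hGdef, Finset.mul_sum, Finset.mul_sum]
              exact Finset.sum_le_sum hterm
            have hG0 : 0 ≤ G := Finset.sum_nonneg fun j _ => (pow_pos hρ0 j).le
            have hG : (ρ - 1) * G ≤ ρ ^ (n + 1) := by
              rw [hGdef, mul_comm, geom_sum_mul]
              linarith [(pow_pos hρ0 (n+1)).le]
            have hsplit : r ^ (((n:ℝ) + 2) * α) = r ^ ((n:ℝ) * α) * x * x := by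
              rw [hxdef, show ((n:ℝ)+2)*α = (n:ℝ)*α + α + α by ring,
                Real.rpow_add hr, Real.rpow_add hr]
            have hsplit1 : r ^ (((n:ℝ) + 1) * α) = r ^ ((n:ℝ) * α) * x := by
              rw [hxdef, show ((n:ℝ)+1)*α = (n:ℝ)*α + α by ring, Real.rpow_add hr]
            have ihn1 : C (n + 1) * (r ^ ((n:ℝ) * α) * x) ≤ A * ρ ^ (n + 1) := by
              have := ihn (n + 1) le_rfl
              push_cast at this
              rwa [hsplit1] at this
            have e2 : α^2*((n:ℝ)+2)*((n:ℝ)+1) * (C (n+2) * (r ^ ((n:ℝ)*α) * x * x))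
                = M*x*(x*S) + M*(C (n+1) * (r ^ ((n:ℝ)*α) * x))*x^2 := by
              have hy : r ^ ((n:ℝ)*α) ≠ 0 := (hrpow _).ne'
              calc α^2*((n:ℝ)+2)*((n:ℝ)+1) * (C (n+2) * (r ^ ((n:ℝ)*α) * x * x))
                  = (α^2*((n:ℝ)+2)*((n:ℝ)+1) * C (n+2)) * (r ^ ((n:ℝ)*α) * x * x) := by
                    ring
                _ = (M / r ^ ((n:ℝ)*α) * S + M * C (n+1) * x) * (r ^ ((n:ℝ)*α) * x * x) := by
                    rw [h]
                _ = M*x*(x*S) + M*(C (n+1) * (r ^ ((n:ℝ)*α) * x))*x^2 := by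
                    field_simp
            have hco : (0:ℝ) < α^2*((n:ℝ)+2)*((n:ℝ)+1) := by positivity
            have hK' : 0 ≤ α*((n:ℝ)+1)*A*ρ + A*x :=
              add_nonneg (mul_nonneg (mul_nonneg (mul_nonneg hα0.le (by positivity)) hA0.le)
                hρ0.le) (mul_nonneg hA0.le hx.le)
            have hcast : (((n:ℕ) + 2 : ℕ) : ℝ) = (n:ℝ) + 2 := by push_cast; ring
            rw [hcast, hsplit]
            have hfac : (0:ℝ) < (ρ-1) * (α^2*((n:ℝ)+2)*((n:ℝ)+1)) := mul_pos hs hco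
            refine le_of_mul_le_mul_left ?_ hfac
            have b1 : M*x*(x*S) ≤ M*x*((α*((n:ℝ)+1)*A*ρ + A*x) * G) :=
              mul_le_mul_of_nonneg_left hxS (by positivity)
            have b2 : M*(C (n+1) * (r ^ ((n:ℝ)*α) * x))*x^2 ≤ M*(A*ρ^(n+1))*x^2 :=
              mul_le_mul_of_nonneg_right (mul_le_mul_of_nonneg_left ihn1 hM.le)
                (by positivity)
            have hp : (0:ℝ) ≤ ρ ^ (n+1) := (pow_pos hρ0 _).le
            have hinner : M*x*(α*((n:ℝ)+1)*A*ρ + A*x) + (ρ-1)*(M*A*x^2)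
                ≤ (ρ-1)*(α^2*((n:ℝ)+2)*((n:ℝ)+1))*(A*ρ) := by
              nlinarith [mul_le_mul_of_nonneg_left hB1
                  (show (0:ℝ) ≤ α*((n:ℝ)+1)*ρ*A by
                    exact mul_nonneg (mul_nonneg (mul_nonneg hα0.le (by positivity)) hρ0.le)
                      hA0.le),
                mul_le_mul_of_nonneg_left hB2
                  (show (0:ℝ) ≤ ρ*A by exact mul_nonneg hρ0.le hA0.le),
                mul_nonneg (mul_nonneg (mul_nonneg (mul_nonneg (mul_nonneg
                  (pow_nonneg hα0.le 2) hs.le) (show (0:ℝ) ≤ (n:ℝ)+1 by positivity))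
                  hρ0.le) hA0.le) (show (0:ℝ) ≤ (n:ℝ)+1 by positivity)]
            calc (ρ-1) * (α^2*((n:ℝ)+2)*((n:ℝ)+1)) * (C (n+2) * (r ^ ((n:ℝ)*α) * x * x))
                = (ρ-1) * (α^2*((n:ℝ)+2)*((n:ℝ)+1) * (C (n+2) * (r ^ ((n:ℝ)*α) * x * x))) := by
                  ring
              _ = (ρ-1) * (M*x*(x*S) + M*(C (n+1) * (r ^ ((n:ℝ)*α) * x))*x^2) := by rw [e2]
              _ ≤ (ρ-1) * (M*x*((α*((n:ℝ)+1)*A*ρ + A*x) * G) + M*(A*ρ^(n+1))*x^2) :=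
                  mul_le_mul_of_nonneg_left (add_le_add b1 b2) hs.le
              _ = M*x*(α*((n:ℝ)+1)*A*ρ + A*x) * ((ρ-1)*G)
                  + (ρ-1)*(M*(A*ρ^(n+1))*x^2) := by ring
              _ ≤ M*x*(α*((n:ℝ)+1)*A*ρ + A*x) * ρ^(n+1)
                  + (ρ-1)*(M*(A*ρ^(n+1))*x^2) := by
                  have hnn : 0 ≤ M*x*(α*((n:ℝ)+1)*A*ρ + A*x) :=
                    mul_nonneg (mul_nonneg hM.le hx.le) hK'
                  exact add_le_add_left (mul_le_mul_of_nonneg_left hG hnn) _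
              _ = (M*x*(α*((n:ℝ)+1)*A*ρ + A*x) + (ρ-1)*(M*A*x^2)) * ρ^(n+1) := by ring
              _ ≤ ((ρ-1)*(α^2*((n:ℝ)+2)*((n:ℝ)+1))*(A*ρ)) * ρ^(n+1) :=
                  mul_le_mul_of_nonneg_right hinner hp
              _ = (ρ-1) * (α^2*((n:ℝ)+2)*((n:ℝ)+1)) * (A * ρ^(n+2)) := by ring
    intro k; exact H k k (by omega)
  -- conclude by comparison with a geometric series
  have hgeo : Summable (fun k : ℕ => A * (ρ*q)^k) :=
    (summable_geometric_of_lt_one (mul_nonneg hρ0.le hq0.le) hρq).mul_left A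
  apply Summable.of_nonneg_of_le ?_ ?_ hgeo
  · intro k
    exact (mul_pos (hpos k) (Real.rpow_pos_of_pos ht _)).le
  · intro k
    have h1 : r ^ ((k:ℝ)*α) * (t/r) ^ ((k:ℝ)*α) = t ^ ((k:ℝ)*α) := by
      rw [← Real.mul_rpow hr.le (div_pos ht hr).le]
      congr 1
      field_simp
    have h2 : (t/r) ^ ((k:ℝ)*α) = q ^ k := by
      rw [hqdef, ← Real.rpow_natCast ((t/r)^α) k, ← Real.rpow_mul (div_pos ht hr).le]
      congr 1
      ring
    have e1 : t ^ ((k:ℝ)*α) = r ^ ((k:ℝ)*α) * q ^ k := by rw [← h1, h2]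
    rw [e1]
    calc C k * (r ^ ((k:ℝ)*α) * q^k) = (C k * r ^ ((k:ℝ)*α)) * q^k := by ring
      _ ≤ (A * ρ^k) * q^k := mul_le_mul_of_nonneg_right (key k) (pow_nonneg hq0.le k)
      _ = A * (ρ*q)^k := by rw [mul_pow]; ring
end

section
/- Let α ∈ (0,1], M > 0, r > 0, and let (p_k), (q_k) be real sequences with |p_k| ≤ M/r^{kα} and |q_k| ≤ M/r^{kα} for all k ≥ 0. Let c₀, c₁ ∈ ℝ and define c_k for k ≥ 2 by α²(k+2)(k+1)c_{k+2} = −∑_{j=0}^{k} [α(j+1) p_{k−j} c_{j+1} + q_{k−j} c_j]. Let C₀ = |c₀|, C₁ = |c₁| and define C_k for k ≥ 2 by α²(k+2)(k+1)C_{k+2} = (M/r^{kα}) ∑_{j=0}^{k} [α(j+1)C_{j+1} + C_j] r^{jα} + M C_{k+1} r^{α}. Then |c_k| ≤ C_k for all k ≥ 0. -/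
open Finset

theorem stmt_2 (α M r : ℝ) (hα : α ∈ Set.Ioc (0:ℝ) 1) (hM : 0 < M) (hr : 0 < r)
    (p q : ℕ → ℝ)
    (hp : ∀ k : ℕ, |p k| ≤ M / r ^ ((k : ℝ) * α))
    (hq : ∀ k : ℕ, |q k| ≤ M / r ^ ((k : ℝ) * α))
    (c : ℕ → ℝ)
    (hcrec : ∀ k : ℕ, α ^ 2 * ((k : ℝ) + 2) * ((k : ℝ) + 1) * c (k + 2)
      = -∑ j ∈ Finset.range (k + 1),
          (α * ((j : ℝ) + 1) * p (k - j) * c (j + 1) + q (k - j) * c j))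
    (C : ℕ → ℝ) (hC0 : C 0 = |c 0|) (hC1 : C 1 = |c 1|)
    (hCrec : ∀ k : ℕ, α ^ 2 * ((k : ℝ) + 2) * ((k : ℝ) + 1) * C (k + 2)
      = M / r ^ ((k : ℝ) * α) *
          ∑ j ∈ Finset.range (k + 1),
            (α * ((j : ℝ) + 1) * C (j + 1) + C j) * r ^ ((j : ℝ) * α)
        + M * C (k + 1) * r ^ α) :
    ∀ k : ℕ, |c k| ≤ C k := by
  obtain ⟨hα0, hα1⟩ := hα
  intro k
  induction k using Nat.strong_induction_on with
  | _ k ih =>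
  match k, ih with
  | 0, _ => simp [hC0]
  | 1, _ => simp [hC1]
  | (k+2), ih =>
    have hd : (0:ℝ) < α ^ 2 * ((k:ℝ) + 2) * ((k:ℝ) + 1) := by positivity
    have hCk1 : 0 ≤ C (k+1) := le_trans (abs_nonneg _) (ih (k+1) (by omega))
    have hb : ∀ j ∈ Finset.range (k+1),
        |α * ((j:ℝ) + 1) * p (k - j) * c (j + 1) + q (k - j) * c j|
          ≤ (α * ((j:ℝ) + 1) * C (j + 1) + C j) * (M / r ^ ((k:ℝ) * α) * r ^ ((j:ℝ) * α)) := by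
      intro j hj
      have hjk : j ≤ k := by
        have := Finset.mem_range.mp hj; omega
      have h1 : |c (j+1)| ≤ C (j+1) := ih (j+1) (by omega)
      have h2 : |c j| ≤ C j := ih j (by omega)
      have hEe : M / r ^ (((k - j : ℕ) : ℝ) * α) = M / r ^ ((k:ℝ) * α) * r ^ ((j:ℝ) * α) := by
        rw [Nat.cast_sub hjk, sub_mul, Real.rpow_sub hr]
        have h3 := (Real.rpow_pos_of_pos hr ((k:ℝ)*α)).ne'
        have h4 := (Real.rpow_pos_of_pos hr ((j:ℝ)*α)).ne'
        field_simp
      have hpe : |p (k - j)| ≤ M / r ^ ((k:ℝ) * α) * r ^ ((j:ℝ) * α) := hEe ▸ hp (k - j)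
      have hqe : |q (k - j)| ≤ M / r ^ ((k:ℝ) * α) * r ^ ((j:ℝ) * α) := hEe ▸ hq (k - j)
      calc |α * ((j:ℝ) + 1) * p (k - j) * c (j + 1) + q (k - j) * c j|
          ≤ |α * ((j:ℝ) + 1) * p (k - j) * c (j + 1)| + |q (k - j) * c j| := abs_add_le _ _
        _ = α * ((j:ℝ) + 1) * |p (k - j)| * |c (j + 1)| + |q (k - j)| * |c j| := by
            rw [abs_mul, abs_mul, abs_mul, abs_mul, abs_of_pos hα0,
              abs_of_nonneg (by positivity : (0:ℝ) ≤ (j:ℝ) + 1)]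
        _ ≤ α * ((j:ℝ) + 1) * (M / r ^ ((k:ℝ) * α) * r ^ ((j:ℝ) * α)) * C (j + 1)
              + (M / r ^ ((k:ℝ) * α) * r ^ ((j:ℝ) * α)) * C j := by
            gcongr
        _ = (α * ((j:ℝ) + 1) * C (j + 1) + C j) * (M / r ^ ((k:ℝ) * α) * r ^ ((j:ℝ) * α)) := by
            ring
    have hsum : |∑ j ∈ Finset.range (k+1),
        (α * ((j:ℝ) + 1) * p (k - j) * c (j + 1) + q (k - j) * c j)|
        ≤ M / r ^ ((k:ℝ) * α) * ∑ j ∈ Finset.range (k+1),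
            (α * ((j:ℝ) + 1) * C (j + 1) + C j) * r ^ ((j:ℝ) * α) := by
      calc _ ≤ ∑ j ∈ Finset.range (k+1),
            |α * ((j:ℝ) + 1) * p (k - j) * c (j + 1) + q (k - j) * c j| :=
          Finset.abs_sum_le_sum_abs _ _
        _ ≤ ∑ j ∈ Finset.range (k+1),
            (α * ((j:ℝ) + 1) * C (j + 1) + C j) * (M / r ^ ((k:ℝ) * α) * r ^ ((j:ℝ) * α)) :=
          Finset.sum_le_sum hb
        _ = _ := by
          rw [Finset.mul_sum]
          exact Finset.sum_congr rfl fun j _ => by ring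
    have hterm : 0 ≤ M * C (k+1) * r ^ α := by positivity
    have h3 : α ^ 2 * ((k:ℝ) + 2) * ((k:ℝ) + 1) * |c (k+2)|
        ≤ α ^ 2 * ((k:ℝ) + 2) * ((k:ℝ) + 1) * C (k+2) := by
      have habs : α ^ 2 * ((k:ℝ) + 2) * ((k:ℝ) + 1) * |c (k+2)|
          = |α ^ 2 * ((k:ℝ) + 2) * ((k:ℝ) + 1) * c (k+2)| := by
        rw [abs_mul, abs_of_pos hd]
      rw [habs, hcrec k, abs_neg, hCrec k]
      linarith
    exact le_of_mul_le_mul_left h3 hd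
end

section
/- Let α ∈ (0,1], x₀ ∈ ℝ, and let (p_k), (q_k) be real sequences such that ∑_{k=0}^{∞} p_k t^{kα} converges for 0 ≤ t < δ₁ and ∑_{k=0}^{∞} q_k t^{kα} converges for 0 ≤ t < δ₂, where δ₁, δ₂ > 0. Let c₀, c₁ ∈ ℝ and define c_k for k ≥ 2 by the recurrence α²(k+2)(k+1)c_{k+2} = −∑_{j=0}^{k} [α(j+1) p_{k−j} c_{j+1} + q_{k−j} c_j]. Then the series ∑_{k=0}^{∞} c_k (x − x₀)^{kα} converges for every x ∈ (x₀, x₀ + ρ), where ρ = min{δ₁, δ₂}. -/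
open Finset



lemma geom_aux (y : ℝ) (h0 : 0 ≤ y) (h1 : y < 1) (n : ℕ) :
    ∑ i ∈ range n, y ^ i ≤ (1 - y)⁻¹ := by
  rw [geom_sum_eq (ne_of_lt h1)]
  have hyn : 0 ≤ y ^ n := pow_nonneg h0 n
  have h2 : (0:ℝ) < 1 - y := by linarith
  have he : (y ^ n - 1)/(y - 1) = (1 - y ^ n)/(1 - y) := by
    rw [div_eq_div_iff (by intro h; rw [sub_eq_zero] at h; exact (ne_of_lt h1) h) h2.ne']; ring
  rw [he, div_le_iff₀ h2, inv_mul_cancel₀ h2.ne']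
  linarith

lemma bdd_aux (f : ℕ → ℝ) (hf : Summable f) : ∃ M, 0 < M ∧ ∀ k, |f k| ≤ M := by
  obtain ⟨M, hM⟩ := (hf.tendsto_atTop_zero.abs).bddAbove_range
  refine ⟨M + 1, ?_, fun k => ?_⟩
  · have := hM (Set.mem_range_self 0); have := abs_nonneg (f 0); linarith
  · have := hM (Set.mem_range_self k); linarith

lemma core_aux (α s v M : ℝ) (hα : 0 < α) (hs : 0 < s) (hv : 0 < v)
    (hsv : 1 < s * v) (hM : 0 < M) (p q c : ℕ → ℝ)
    (hpb : ∀ k, |p k| * s ^ k ≤ M) (hqb : ∀ k, |q k| * s ^ k ≤ M)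
    (hcrec : ∀ k : ℕ, α ^ 2 * ((k : ℝ) + 2) * ((k : ℝ) + 1) * c (k + 2)
      = -∑ j ∈ Finset.range (k + 1),
          (α * ((j : ℝ) + 1) * p (k - j) * c (j + 1) + q (k - j) * c j)) :
    ∃ K, 0 < K ∧ ∀ k, |c k| ≤ K * v ^ k := by
  have hsv0 : 0 < s * v := mul_pos hs hv
  set y : ℝ := (s * v)⁻¹ with hy
  have hy0 : 0 < y := inv_pos.mpr hsv0
  have hy1 : y < 1 := by rw [hy]; exact inv_lt_one_of_one_lt₀ hsv
  set D : ℝ := (1 - y)⁻¹ with hD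
  have hD0 : 0 < D := inv_pos.mpr (by linarith)
  -- coefficient bounds
  have hsn : ∀ n : ℕ, s ^ n * (y * v) ^ n = 1 := by
    intro n
    rw [← mul_pow]
    have : s * (y * v) = 1 := by rw [hy]; field_simp
    rw [this, one_pow]
  have hpb' : ∀ n, |p n| ≤ M * (y * v) ^ n := by
    intro n
    have h1 : |p n| = |p n| * s ^ n * (y * v) ^ n := by
      rw [mul_assoc, hsn, mul_one]
    rw [h1]
    exact mul_le_mul_of_nonneg_right (hpb n) (by positivity)
  have hqb' : ∀ n, |q n| ≤ M * (y * v) ^ n := by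
    intro n
    have h1 : |q n| = |q n| * s ^ n * (y * v) ^ n := by
      rw [mul_assoc, hsn, mul_one]
    rw [h1]
    exact mul_le_mul_of_nonneg_right (hqb n) (by positivity)
  -- threshold
  set N : ℕ := ⌈M * (α * v + 1) * D / (α ^ 2 * v ^ 2)⌉₊ with hNdef
  have hN : ∀ m : ℕ, N ≤ m → M * (α * v + 1) * D ≤ α ^ 2 * ((m : ℝ) + 2) * v ^ 2 := by
    intro m hm
    have h1 : M * (α * v + 1) * D / (α ^ 2 * v ^ 2) ≤ (N : ℝ) := Nat.le_ceil _
    have h2 : (N : ℝ) ≤ (m : ℝ) := Nat.cast_le.mpr hm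
    have h3 : (0:ℝ) < α ^ 2 * v ^ 2 := by positivity
    rw [div_le_iff₀ h3] at h1
    nlinarith
  -- constant K
  set K : ℝ := (∑ i ∈ range (N + 2), |c i| / v ^ i) + 1 with hK
  have hK0 : 0 < K := by
    have : 0 ≤ ∑ i ∈ range (N + 2), |c i| / v ^ i :=
      Finset.sum_nonneg fun i _ => by positivity
    rw [hK]; linarith
  have hKbase : ∀ i, i < N + 2 → |c i| ≤ K * v ^ i := by
    intro i hi
    have h1 : |c i| / v ^ i ≤ ∑ j ∈ range (N + 2), |c j| / v ^ j :=
      Finset.single_le_sum (f := fun j => |c j| / v ^ j) (fun j _ => by positivity)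
        (mem_range.mpr hi)
    have h2 : |c i| / v ^ i ≤ K := by rw [hK]; linarith
    rw [div_le_iff₀ (by positivity : (0:ℝ) < v ^ i)] at h2
    linarith [h2]
  refine ⟨K, hK0, fun k => ?_⟩
  induction k using Nat.strong_induction_on with
  | _ k ih =>
    by_cases hk : k < N + 2
    · exact hKbase k hk
    · push_neg at hk
      obtain ⟨m, rfl⟩ : ∃ m, k = m + 2 := ⟨k - 2, by omega⟩
      have hmN : N ≤ m := by omega
      set B : ℝ := M * K * (α * v + 1) * ((m : ℝ) + 1) * v ^ m with hB
      have hB0 : 0 ≤ B := by rw [hB]; positivity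
      have hterm : ∀ j ∈ range (m + 1),
          |α * ((j : ℝ) + 1) * p (m - j) * c (j + 1) + q (m - j) * c j|
            ≤ B * y ^ (m - j) := by
        intro j hj
        rw [mem_range] at hj
        have hjm : j ≤ m := by omega
        have hcj : |c j| ≤ K * v ^ j := ih j (by omega)
        have hcj1 : |c (j + 1)| ≤ K * v ^ (j + 1) := ih (j + 1) (by omega)
        have hp' := hpb' (m - j)
        have hq' := hqb' (m - j)
        have hjpos : (0:ℝ) ≤ α * ((j : ℝ) + 1) := by positivity
        have habs : |α * ((j : ℝ) + 1) * p (m - j) * c (j + 1) + q (m - j) * c j|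
            ≤ α * ((j : ℝ) + 1) * |p (m - j)| * |c (j + 1)| + |q (m - j)| * |c j| := by
          calc |α * ((j : ℝ) + 1) * p (m - j) * c (j + 1) + q (m - j) * c j|
              ≤ |α * ((j : ℝ) + 1) * p (m - j) * c (j + 1)| + |q (m - j) * c j| :=
                abs_add_le _ _
            _ = α * ((j : ℝ) + 1) * |p (m - j)| * |c (j + 1)| + |q (m - j)| * |c j| := by
                rw [abs_mul, abs_mul, abs_mul, abs_mul, abs_of_pos hα, abs_of_nonneg (show (0:ℝ) ≤ (j:ℝ)+1 by positivity)]
        have e1 : (y * v) ^ (m - j) * v ^ (j + 1) = y ^ (m - j) * v ^ (m + 1) := by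
          rw [mul_pow, mul_assoc, ← pow_add]
          congr 2
          omega
        have e2 : (y * v) ^ (m - j) * v ^ j = y ^ (m - j) * v ^ m := by
          rw [mul_pow, mul_assoc, ← pow_add]
          congr 2
          omega
        have hstep : α * ((j : ℝ) + 1) * |p (m - j)| * |c (j + 1)| + |q (m - j)| * |c j|
            ≤ α * ((j : ℝ) + 1) * (M * (y * v) ^ (m - j)) * (K * v ^ (j + 1))
              + (M * (y * v) ^ (m - j)) * (K * v ^ j) := by
          gcongr
        have heq : α * ((j : ℝ) + 1) * (M * (y * v) ^ (m - j)) * (K * v ^ (j + 1))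
              + (M * (y * v) ^ (m - j)) * (K * v ^ j)
            = M * K * (α * ((j : ℝ) + 1) * (y ^ (m - j) * v ^ (m + 1))
              + y ^ (m - j) * v ^ m) := by
          rw [← e1, ← e2]; ring
        have hjle : (j : ℝ) ≤ (m : ℝ) := Nat.cast_le.mpr hjm
        have hfin : M * K * (α * ((j : ℝ) + 1) * (y ^ (m - j) * v ^ (m + 1))
              + y ^ (m - j) * v ^ m) ≤ B * y ^ (m - j) := by
          rw [hB]
          have hP : (0:ℝ) ≤ y ^ (m - j) := by positivity
          have hV : (0:ℝ) ≤ v ^ m := by positivity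
          have hvm1 : v ^ (m + 1) = v ^ m * v := pow_succ v m
          rw [hvm1]
          nlinarith [mul_nonneg (mul_nonneg hM.le hK0.le) (mul_nonneg hP hV),
            mul_nonneg (mul_nonneg (mul_nonneg hM.le hK0.le) (mul_nonneg hP hV))
              (mul_nonneg hα.le hv.le),
            mul_nonneg (mul_nonneg (mul_nonneg (mul_nonneg hM.le hK0.le) (mul_nonneg hP hV))
              (mul_nonneg hα.le hv.le)) (by linarith : (0:ℝ) ≤ (m:ℝ) - j)]
        calc |α * ((j : ℝ) + 1) * p (m - j) * c (j + 1) + q (m - j) * c j|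
            ≤ _ := habs
          _ ≤ _ := hstep
          _ = _ := heq
          _ ≤ B * y ^ (m - j) := hfin
      have hr : ∑ j ∈ range (m + 1), y ^ (m - j) = ∑ j ∈ range (m + 1), y ^ j := by
        have := Finset.sum_range_reflect (fun i => y ^ i) (m + 1)
        simpa using this
      have hS : |∑ j ∈ range (m + 1),
          (α * ((j : ℝ) + 1) * p (m - j) * c (j + 1) + q (m - j) * c j)| ≤ B * D := by
        calc |∑ j ∈ range (m + 1),
            (α * ((j : ℝ) + 1) * p (m - j) * c (j + 1) + q (m - j) * c j)|
            ≤ ∑ j ∈ range (m + 1),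
              |α * ((j : ℝ) + 1) * p (m - j) * c (j + 1) + q (m - j) * c j| :=
              Finset.abs_sum_le_sum_abs _ _
          _ ≤ ∑ j ∈ range (m + 1), B * y ^ (m - j) := Finset.sum_le_sum hterm
          _ = B * ∑ j ∈ range (m + 1), y ^ (m - j) := by rw [Finset.mul_sum]
          _ = B * ∑ j ∈ range (m + 1), y ^ j := by rw [hr]
          _ ≤ B * D := by
              rw [hD]
              exact mul_le_mul_of_nonneg_left (geom_aux y hy0.le hy1 (m + 1)) hB0
      have hrec := hcrec m
      have hA0 : (0:ℝ) < α ^ 2 * ((m : ℝ) + 2) * ((m : ℝ) + 1) := by positivity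
      have h5 : α ^ 2 * ((m : ℝ) + 2) * ((m : ℝ) + 1) * |c (m + 2)| ≤ B * D := by
        calc α ^ 2 * ((m : ℝ) + 2) * ((m : ℝ) + 1) * |c (m + 2)|
            = |α ^ 2 * ((m : ℝ) + 2) * ((m : ℝ) + 1) * c (m + 2)| := by
              rw [abs_mul, abs_of_pos hA0]
          _ = |∑ j ∈ range (m + 1),
              (α * ((j : ℝ) + 1) * p (m - j) * c (j + 1) + q (m - j) * c j)| := by
              rw [hrec, abs_neg]
          _ ≤ B * D := hS
      have h7 := hN m hmN
      have h6 : B * D ≤ α ^ 2 * ((m : ℝ) + 2) * ((m : ℝ) + 1) * (K * v ^ (m + 2)) := by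
        calc B * D = (M * (α * v + 1) * D) * (K * ((m : ℝ) + 1) * v ^ m) := by
              rw [hB]; ring
          _ ≤ (α ^ 2 * ((m : ℝ) + 2) * v ^ 2) * (K * ((m : ℝ) + 1) * v ^ m) :=
              mul_le_mul_of_nonneg_right h7 (by positivity)
          _ = α ^ 2 * ((m : ℝ) + 2) * ((m : ℝ) + 1) * (K * v ^ (m + 2)) := by ring
      have := h5.trans h6
      have hfinal := le_of_mul_le_mul_left (by
        calc α ^ 2 * ((m : ℝ) + 2) * ((m : ℝ) + 1) * |c (m + 2)|
            ≤ α ^ 2 * ((m : ℝ) + 2) * ((m : ℝ) + 1) * (K * v ^ (m + 2)) := this) hA0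
      have hcast : ((m + 2 : ℕ) : ℝ) = (m : ℝ) + 2 := by push_cast; ring
      calc |c (m + 2)| ≤ K * v ^ (m + 2) := hfinal
        _ = K * v ^ (m + 2) := rfl

theorem stmt_3 (α : ℝ) (hα : α ∈ Set.Ioc (0:ℝ) 1) (x₀ : ℝ)
    (p q : ℕ → ℝ) (δ₁ δ₂ : ℝ) (hδ₁ : 0 < δ₁) (hδ₂ : 0 < δ₂)
    (hp : ∀ t : ℝ, 0 ≤ t → t < δ₁ → Summable (fun k : ℕ => p k * t ^ ((k : ℝ) * α)))
    (hq : ∀ t : ℝ, 0 ≤ t → t < δ₂ → Summable (fun k : ℕ => q k * t ^ ((k : ℝ) * α)))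
    (c : ℕ → ℝ)
    (hcrec : ∀ k : ℕ, α ^ 2 * ((k : ℝ) + 2) * ((k : ℝ) + 1) * c (k + 2)
      = -∑ j ∈ Finset.range (k + 1),
          (α * ((j : ℝ) + 1) * p (k - j) * c (j + 1) + q (k - j) * c j)) :
    ∀ x : ℝ, x₀ < x → x < x₀ + min δ₁ δ₂ →
      Summable (fun k : ℕ => c k * (x - x₀) ^ ((k : ℝ) * α)) := by
  obtain ⟨hα0, hα1⟩ := hα
  intro x hx1 hx2
  set ρ : ℝ := min δ₁ δ₂ with hρdef
  set t : ℝ := x - x₀ with htdef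
  have ht0 : 0 < t := by rw [htdef]; linarith
  have htρ : t < ρ := by rw [htdef, hρdef]; linarith [hx2]
  set u : ℝ := t + (ρ - t) / 3 with hudef
  set τ : ℝ := t + 2 * (ρ - t) / 3 with hτdef
  have hu0 : 0 < u := by rw [hudef]; linarith
  have htu : t < u := by rw [hudef]; linarith
  have huτ : u < τ := by rw [hudef, hτdef]; linarith
  have hτρ : τ < ρ := by rw [hτdef]; linarith
  have hτ0 : 0 < τ := by linarith
  have hτδ₁ : τ < δ₁ := lt_of_lt_of_le hτρ (min_le_left _ _)
  have hτδ₂ : τ < δ₂ := lt_of_lt_of_le hτρ (min_le_right _ _)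
  obtain ⟨M₁, hM₁0, hM₁⟩ := bdd_aux _ (hp τ hτ0.le hτδ₁)
  obtain ⟨M₂, hM₂0, hM₂⟩ := bdd_aux _ (hq τ hτ0.le hτδ₂)
  set M : ℝ := M₁ + M₂ with hMdef
  have hM0 : 0 < M := by rw [hMdef]; linarith
  have hpow : ∀ w : ℝ, 0 < w → ∀ k : ℕ, w ^ ((k : ℝ) * α) = (w ^ α) ^ k := by
    intro w hw k
    rw [mul_comm, Real.rpow_mul hw.le, Real.rpow_natCast]
  set s : ℝ := τ ^ α with hsdef
  have hs0 : 0 < s := Real.rpow_pos_of_pos hτ0 α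
  set v : ℝ := (u ^ α)⁻¹ with hvdef
  have huα : 0 < u ^ α := Real.rpow_pos_of_pos hu0 α
  have hv0 : 0 < v := inv_pos.mpr huα
  have hsv : 1 < s * v := by
    have h1 : s * v = (τ / u) ^ α := by
      rw [hsdef, hvdef, Real.div_rpow hτ0.le hu0.le, div_eq_mul_inv]
    rw [h1]
    exact (Real.one_lt_rpow_iff_of_pos (by positivity)).mpr
      (Or.inl ⟨(one_lt_div hu0).mpr huτ, hα0⟩)
  have hpb : ∀ k, |p k| * s ^ k ≤ M := by
    intro k
    have h1 := hM₁ k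
    rw [abs_mul, hpow τ hτ0 k, abs_of_nonneg (by positivity : (0:ℝ) ≤ (τ ^ α) ^ k)] at h1
    rw [hMdef]; rw [hsdef]; linarith
  have hqb : ∀ k, |q k| * s ^ k ≤ M := by
    intro k
    have h1 := hM₂ k
    rw [abs_mul, hpow τ hτ0 k, abs_of_nonneg (by positivity : (0:ℝ) ≤ (τ ^ α) ^ k)] at h1
    rw [hMdef]; rw [hsdef]; linarith
  obtain ⟨K, hK0, hK⟩ := core_aux α s v M hα0 hs0 hv0 hsv hM0 p q c hpb hqb hcrec
  have hr1 : t ^ α * v < 1 := by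
    have h1 : t ^ α * v = (t / u) ^ α := by
      rw [hvdef, Real.div_rpow ht0.le hu0.le, div_eq_mul_inv]
    rw [h1]
    exact Real.rpow_lt_one (by positivity) ((div_lt_one hu0).mpr htu) hα0
  have hr0 : 0 ≤ t ^ α * v := by positivity
  apply Summable.of_norm_bounded (g := fun k : ℕ => K * (t ^ α * v) ^ k)
    ((summable_geometric_of_lt_one hr0 hr1).mul_left K)
  intro k
  rw [Real.norm_eq_abs, abs_mul, hpow t ht0 k,
    abs_of_nonneg (by positivity : (0:ℝ) ≤ (t ^ α) ^ k)]
  calc |c k| * (t ^ α) ^ k ≤ K * v ^ k * (t ^ α) ^ k :=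
        mul_le_mul_of_nonneg_right (hK k) (by positivity)
    _ = K * (t ^ α * v) ^ k := by rw [mul_pow]; ring
end

section
/- Let α ∈ (0,1] and let (c_k) be a real sequence such that y(x) = ∑_{k=0}^{∞} c_k x^{kα} converges on an interval (0, R) with R > 0 and satisfies T_α T_α y − x^{α} T_α y − y = 0 on (0, R). Then 2α² c₂ = c₀ and α²(k+1)(k+2) c_{k+2} = (kα + 1) c_k for every k ≥ 1. -/
open FormalMultilinearSeries Filter Set
open scoped ENNReal NNReal

private lemma diag_eval (q : FormalMultilinearSeries ℝ ℝ ℝ) (n : ℕ) (t : ℝ) :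
    (q n fun _ ↦ t) = (q n fun _ ↦ (1:ℝ)) * t ^ n := by
  have h := (q n).map_smul_univ (fun _ : Fin n => t) (fun _ : Fin n => (1:ℝ))
  simp only [smul_eq_mul, mul_one, Finset.prod_const, Finset.card_univ, Fintype.card_fin] at h
  rw [h]; ring

private lemma radius_ge_of_summable (a : ℕ → ℝ) {t : ℝ} (ht : 0 < t)
    (h : Summable fun n : ℕ ↦ a n * t ^ n) :
    ENNReal.ofReal t ≤ (FormalMultilinearSeries.ofScalars ℝ a).radius := by
  have h0 : Filter.Tendsto (fun n : ℕ ↦ |a n * t ^ n|) atTop (nhds 0) := by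
    simpa using h.tendsto_atTop_zero.abs
  obtain ⟨C, hC⟩ := h0.bddAbove_range
  have := (FormalMultilinearSeries.ofScalars ℝ a).le_radius_of_bound C
    (r := t.toNNReal) (fun n : ℕ ↦ ?_)
  · simpa [ENNReal.ofReal] using this
  · rw [FormalMultilinearSeries.ofScalars_norm]
    have : ‖a n‖ * (t.toNNReal : ℝ) ^ n = |a n * t ^ n| := by
      rw [Real.coe_toNNReal _ ht.le, abs_mul, abs_pow, abs_of_pos ht, Real.norm_eq_abs]
    rw [this]
    exact hC (Set.mem_range_self n)

theorem stmt_5 (α : ℝ) (hα : α ∈ Set.Ioc (0:ℝ) 1) (c : ℕ → ℝ) (R : ℝ) (hR : 0 < R)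
    (hconv : ∀ x : ℝ, 0 < x → x < R → Summable (fun k : ℕ => c k * x ^ ((k : ℝ) * α)))
    (y : ℝ → ℝ) (hy : y = fun x => ∑' k : ℕ, c k * x ^ ((k : ℝ) * α))
    (T : (ℝ → ℝ) → (ℝ → ℝ)) (hT : T = fun f x => x ^ (1 - α) * deriv f x)
    (heq : ∀ x : ℝ, 0 < x → x < R → T (T y) x - x ^ α * T y x - y x = 0) :
    2 * α ^ 2 * c 2 = c 0 ∧
      ∀ k : ℕ, 1 ≤ k →
        α ^ 2 * ((k : ℝ) + 1) * ((k : ℝ) + 2) * c (k + 2) = ((k : ℝ) * α + 1) * c k := by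
  obtain ⟨hα0, hα1⟩ := hα
  subst hT
  subst hy
  set Y : ℝ → ℝ := fun x => ∑' k : ℕ, c k * x ^ ((k : ℝ) * α) with hYdef
  -- basic rpow identity
  have hrpow : ∀ u : ℝ, 0 < u → ∀ k : ℕ, u ^ ((k : ℝ) * α) = (u ^ α) ^ k := by
    intro u hu k
    rw [mul_comm, Real.rpow_mul hu.le, Real.rpow_natCast]
  -- the power series and its sum
  set p : FormalMultilinearSeries ℝ ℝ ℝ := FormalMultilinearSeries.ofScalars ℝ c with hp
  set g : ℝ → ℝ := p.sum with hgdef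
  set x₀ : ℝ := R / 2 with hx₀def
  have hx₀ : 0 < x₀ := by positivity
  have hx₀R : x₀ < R := by simp only [hx₀def]; linarith
  set t₀ : ℝ := x₀ ^ α with ht₀def
  have ht₀ : 0 < t₀ := Real.rpow_pos_of_pos hx₀ α
  have hsum₀ : Summable fun k : ℕ ↦ c k * t₀ ^ k := by
    refine (hconv x₀ hx₀ hx₀R).congr fun k => ?_
    rw [hrpow x₀ hx₀ k]
  have hrad : ENNReal.ofReal t₀ ≤ p.radius := radius_ge_of_summable c ht₀ hsum₀
  set rnn : NNReal := t₀.toNNReal with hrnn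
  have hrncoe : (rnn : ℝ) = t₀ := Real.coe_toNNReal _ ht₀.le
  have hradr : (rnn : ℝ≥0∞) ≤ p.radius := hrad
  have hrnnpos : (0 : ℝ≥0∞) < rnn := by
    simp only [ENNReal.coe_pos]
    exact Real.toNNReal_pos.mpr ht₀
  have hg : HasFPowerSeriesOnBall g p 0 rnn :=
    (p.hasFPowerSeriesOnBall (lt_of_lt_of_le hrnnpos hradr)).mono hrnnpos hradr
  have hmem : ∀ t : ℝ, |t| < t₀ → t ∈ Metric.eball (0 : ℝ) (rnn : ℝ≥0∞) := by
    intro t htl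
    rw [Metric.emetric_ball_nnreal, Metric.mem_ball, dist_zero_right, Real.norm_eq_abs, hrncoe]
    exact htl
  -- derivative power series
  set L : (ℝ →L[ℝ] ℝ) →L[ℝ] ℝ := ContinuousLinearMap.apply ℝ ℝ 1 with hL
  have hLf : ∀ f : ℝ → ℝ, (L ∘ fderiv ℝ f) = deriv f := by
    intro f
    funext t
    simp [hL, ContinuousLinearMap.apply_apply, fderiv_apply_one_eq_deriv]
  set q1 : FormalMultilinearSeries ℝ ℝ ℝ := L.compFormalMultilinearSeries p.derivSeries with hq1
  have hd1 : HasFPowerSeriesOnBall (deriv g) q1 0 rnn := by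
    have h := L.comp_hasFPowerSeriesOnBall hg.fderiv
    rwa [hLf g] at h
  set q2 : FormalMultilinearSeries ℝ ℝ ℝ := L.compFormalMultilinearSeries q1.derivSeries with hq2
  have hd2 : HasFPowerSeriesOnBall (deriv (deriv g)) q2 0 rnn := by
    have h := L.comp_hasFPowerSeriesOnBall hd1.fderiv
    rwa [hLf (deriv g)] at h
  -- coefficients
  have hpcoeff : ∀ n : ℕ, (p n fun _ ↦ (1:ℝ)) = c n := by
    intro n
    rw [hp, FormalMultilinearSeries.ofScalars_apply_eq]
    simp
  have hq1coeff : ∀ n : ℕ, (q1 n fun _ ↦ (1:ℝ)) = ((n : ℝ) + 1) * c (n + 1) := by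
    intro n
    rw [hq1, ContinuousLinearMap.compFormalMultilinearSeries_apply,
      ContinuousLinearMap.compContinuousMultilinearMap_coe]
    simp only [Function.comp_apply, hL, ContinuousLinearMap.apply_apply]
    rw [p.derivSeries_apply_diag, hpcoeff]
    rw [nsmul_eq_mul]
    push_cast
    ring
  have hq2coeff : ∀ n : ℕ, (q2 n fun _ ↦ (1:ℝ)) = ((n : ℝ) + 1) * (((n : ℝ) + 2) * c (n + 2)) := by
    intro n
    rw [hq2, ContinuousLinearMap.compFormalMultilinearSeries_apply,
      ContinuousLinearMap.compContinuousMultilinearMap_coe]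
    simp only [Function.comp_apply, hL, ContinuousLinearMap.apply_apply]
    rw [q1.derivSeries_apply_diag, hq1coeff]
    rw [nsmul_eq_mul]
    push_cast
    ring
  -- HasSum statements on the ball
  have hSg : ∀ t ∈ EMetric.ball (0 : ℝ) (rnn : ℝ≥0∞), HasSum (fun n : ℕ ↦ c n * t ^ n) (g t) := by
    intro t ht
    have h := hg.hasSum ht
    rw [zero_add] at h
    have hfe : (fun n : ℕ ↦ p n fun _ ↦ t) = fun n : ℕ ↦ c n * t ^ n := by
      funext n
      rw [diag_eval, hpcoeff]
    rwa [hfe] at h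
  have hS1 : ∀ t ∈ EMetric.ball (0 : ℝ) (rnn : ℝ≥0∞),
      HasSum (fun n : ℕ ↦ ((n : ℝ) + 1) * c (n + 1) * t ^ n) (deriv g t) := by
    intro t ht
    have h := hd1.hasSum ht
    rw [zero_add] at h
    have hfe : (fun n : ℕ ↦ q1 n fun _ ↦ t) = fun n : ℕ ↦ ((n : ℝ) + 1) * c (n + 1) * t ^ n := by
      funext n
      rw [diag_eval, hq1coeff]
    rwa [hfe] at h
  have hS2 : ∀ t ∈ EMetric.ball (0 : ℝ) (rnn : ℝ≥0∞),
      HasSum (fun n : ℕ ↦ ((n : ℝ) + 1) * (((n : ℝ) + 2) * c (n + 2)) * t ^ n)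
        (deriv (deriv g) t) := by
    intro t ht
    have h := hd2.hasSum ht
    rw [zero_add] at h
    have hfe : (fun n : ℕ ↦ q2 n fun _ ↦ t)
        = fun n : ℕ ↦ ((n : ℝ) + 1) * (((n : ℝ) + 2) * c (n + 2)) * t ^ n := by
      funext n
      rw [diag_eval, hq2coeff]
    rwa [hfe] at h
  -- Y equals g ∘ rpow on positives
  have hgt : ∀ t : ℝ, g t = ∑' n : ℕ, c n * t ^ n := by
    intro t
    rw [hgdef]
    exact tsum_congr fun n : ℕ ↦ by
      rw [hp, FormalMultilinearSeries.ofScalars_apply_eq, smul_eq_mul]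
  have hYeq : ∀ u : ℝ, 0 < u → Y u = g (u ^ α) := by
    intro u hu
    rw [hgt]
    exact tsum_congr fun k ↦ by rw [hrpow u hu k]
  -- analyticity
  have hag : AnalyticOnNhd ℝ g (EMetric.ball (0 : ℝ) (rnn : ℝ≥0∞)) := hg.analyticOnNhd
  have hag1 : AnalyticOnNhd ℝ (deriv g) (EMetric.ball (0 : ℝ) (rnn : ℝ≥0∞)) := hd1.analyticOnNhd
  have hag2 : AnalyticOnNhd ℝ (deriv (deriv g)) (EMetric.ball (0 : ℝ) (rnn : ℝ≥0∞)) :=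
    hd2.analyticOnNhd
  -- membership of u^α for u ∈ (0, x₀)
  have humem : ∀ u : ℝ, 0 < u → u < x₀ → u ^ α ∈ EMetric.ball (0 : ℝ) (rnn : ℝ≥0∞) := by
    intro u hu0 hux
    refine hmem _ ?_
    rw [abs_of_pos (Real.rpow_pos_of_pos hu0 α)]
    exact Real.rpow_lt_rpow hu0.le hux hα0
  -- the function T Y on (0, x₀)
  have hTy : ∀ u ∈ Set.Ioo (0 : ℝ) x₀, u ^ (1 - α) * deriv Y u = α * deriv g (u ^ α) := by
    intro u hu
    obtain ⟨hu0, hux⟩ := hu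
    have htball := humem u hu0 hux
    have hgd : HasDerivAt g (deriv g (u ^ α)) (u ^ α) :=
      ((hag _ htball).differentiableAt).hasDerivAt
    have hup : HasDerivAt (fun v : ℝ => v ^ α) (α * u ^ (α - 1)) u :=
      Real.hasDerivAt_rpow_const (Or.inl hu0.ne')
    have hcomp : HasDerivAt (fun v : ℝ => g (v ^ α))
        (deriv g (u ^ α) * (α * u ^ (α - 1))) u := by have := hgd.comp u hup; exact this
    have hyd : HasDerivAt Y (deriv g (u ^ α) * (α * u ^ (α - 1))) u := by
      refine hcomp.congr_of_eventuallyEq ?_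
      filter_upwards [isOpen_Ioi.mem_nhds (show u ∈ Set.Ioi (0:ℝ) from hu0)] with v hv
      exact hYeq v hv
    rw [hyd.deriv]
    have h1 : u ^ (1 - α) * u ^ (α - 1) = 1 := by
      rw [← Real.rpow_add hu0]
      norm_num
    calc u ^ (1 - α) * (deriv g (u ^ α) * (α * u ^ (α - 1)))
        = α * deriv g (u ^ α) * (u ^ (1 - α) * u ^ (α - 1)) := by ring
      _ = α * deriv g (u ^ α) := by rw [h1, mul_one]
  -- the key ODE for g
  have hkey : ∀ t ∈ Set.Ioo (0 : ℝ) t₀,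
      α ^ 2 * deriv (deriv g) t - α * t * deriv g t - g t = 0 := by
    intro t ht
    obtain ⟨ht0, htt⟩ := ht
    set u : ℝ := t ^ α⁻¹ with hudef
    have hu0 : 0 < u := Real.rpow_pos_of_pos ht0 _
    have huα : u ^ α = t := Real.rpow_inv_rpow ht0.le hα0.ne'
    have hux : u < x₀ := by
      by_contra hcon
      push_neg at hcon
      have : x₀ ^ α ≤ u ^ α := Real.rpow_le_rpow hx₀.le hcon hα0.le
      rw [huα] at this
      exact absurd htt (not_lt.mpr (le_trans (le_of_eq rfl) this))
    have huIoo : u ∈ Set.Ioo (0 : ℝ) x₀ := ⟨hu0, hux⟩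
    have htball := humem u hu0 hux
    -- derivative of T Y at u
    have hgd2 : HasDerivAt (deriv g) (deriv (deriv g) (u ^ α)) (u ^ α) :=
      ((hag1 _ htball).differentiableAt).hasDerivAt
    have hup : HasDerivAt (fun v : ℝ => v ^ α) (α * u ^ (α - 1)) u :=
      Real.hasDerivAt_rpow_const (Or.inl hu0.ne')
    have hcomp : HasDerivAt (fun v : ℝ => α * deriv g (v ^ α))
        (α * (deriv (deriv g) (u ^ α) * (α * u ^ (α - 1)))) u :=
      by have := hgd2.comp u hup; exact this.const_mul α
    have hTyd : HasDerivAt (fun x : ℝ => x ^ (1 - α) * deriv Y x)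
        (α * (deriv (deriv g) (u ^ α) * (α * u ^ (α - 1)))) u := by
      refine hcomp.congr_of_eventuallyEq ?_
      filter_upwards [isOpen_Ioo.mem_nhds huIoo] with v hv
      exact hTy v hv
    have heq' := heq u hu0 (hux.trans hx₀R)
    simp only at heq'
    rw [hTyd.deriv] at heq'
    rw [hTy u huIoo] at heq'
    rw [hYeq u hu0] at heq'
    have h1 : u ^ (1 - α) * u ^ (α - 1) = 1 := by
      rw [← Real.rpow_add hu0]
      norm_num
    rw [huα] at heq'
    calc α ^ 2 * deriv (deriv g) t - α * t * deriv g t - g t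
        = u ^ (1 - α) * (α * (deriv (deriv g) t * (α * u ^ (α - 1)))) - t * (α * deriv g t)
            - g t + (α ^ 2 * deriv (deriv g) t) * (1 - u ^ (1 - α) * u ^ (α - 1)) := by
          ring
      _ = 0 := by rw [h1]; ring_nf; ring_nf at heq'; linarith [heq']
  -- identity theorem
  set h : ℝ → ℝ := fun t => α ^ 2 * deriv (deriv g) t - α * t * deriv g t - g t with hhdef
  have hanal : AnalyticOnNhd ℝ h (EMetric.ball (0 : ℝ) (rnn : ℝ≥0∞)) := by
    apply AnalyticOnNhd.sub
    apply AnalyticOnNhd.sub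
    · exact analyticOnNhd_const.mul hag2
    · exact (analyticOnNhd_const.mul analyticOnNhd_id).mul hag1
    · exact hag
  have hUopen : IsOpen (Metric.ball (0 : ℝ) (rnn : ℝ)) := Metric.isOpen_ball
  have hball_eq : EMetric.ball (0 : ℝ) (rnn : ℝ≥0∞) = Metric.ball (0 : ℝ) (rnn : ℝ) :=
    Metric.emetric_ball_nnreal
  have hz₀ : t₀ / 2 ∈ EMetric.ball (0 : ℝ) (rnn : ℝ≥0∞) := hmem _ (by
    rw [abs_of_pos (by linarith)]
    linarith)
  have hzero : Set.EqOn h 0 (EMetric.ball (0 : ℝ) (rnn : ℝ≥0∞)) := by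
    refine hanal.eqOn_zero_of_preconnected_of_eventuallyEq_zero ?_ hz₀ ?_
    · rw [hball_eq]
      exact (convex_ball (0 : ℝ) (rnn : ℝ)).isPreconnected
    · have hIoo : Set.Ioo (0 : ℝ) t₀ ∈ nhds (t₀ / 2) :=
        isOpen_Ioo.mem_nhds ⟨by linarith, by linarith⟩
      filter_upwards [hIoo] with t ht
      exact hkey t ht
  have hFG : (fun t => α ^ 2 * deriv (deriv g) t)
      =ᶠ[nhds (0 : ℝ)] fun t => α * t * deriv g t + g t := by
    have hball : EMetric.ball (0 : ℝ) (rnn : ℝ≥0∞) ∈ nhds (0 : ℝ) := by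
      rw [hball_eq]
      exact Metric.ball_mem_nhds _ (by rw [hrncoe]; exact ht₀)
    filter_upwards [hball] with t ht
    have := hzero ht
    simp only [hhdef, Pi.zero_apply] at this
    linarith
  -- the two explicit power series
  set a : ℕ → ℝ := fun n => α ^ 2 * (((n : ℝ) + 1) * (((n : ℝ) + 2) * c (n + 2))) with hadef
  set b : ℕ → ℝ := fun n => α * (n : ℝ) * c n + c n with hbdef
  have hSF : ∀ t ∈ EMetric.ball (0 : ℝ) (rnn : ℝ≥0∞),
      HasSum (fun n : ℕ ↦ a n * t ^ n) (α ^ 2 * deriv (deriv g) t) := by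
    intro t ht
    have h2 := (hS2 t ht).mul_left (α ^ 2)
    have hfe : (fun n : ℕ ↦ α ^ 2 * (((n : ℝ) + 1) * (((n : ℝ) + 2) * c (n + 2)) * t ^ n))
        = fun n : ℕ ↦ a n * t ^ n := by
      funext n
      simp only [hadef]
      ring
    rwa [hfe] at h2
  have hSG : ∀ t ∈ EMetric.ball (0 : ℝ) (rnn : ℝ≥0∞),
      HasSum (fun n : ℕ ↦ b n * t ^ n) (α * t * deriv g t + g t) := by
    intro t ht
    have h1 := (hS1 t ht).mul_left (α * t)
    have hf1 : (fun n : ℕ => α * ((n : ℝ) + 1) * c (n + 1) * t ^ (n + 1))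
        = fun n : ℕ => α * t * (((n : ℝ) + 1) * c (n + 1) * t ^ n) := by
      funext n
      ring
    have h2 : HasSum (fun n : ℕ => α * ((n + 1 : ℕ) : ℝ) * c (n + 1) * t ^ (n + 1))
        (α * t * deriv g t) := by
      push_cast
      rw [hf1]
      exact h1
    have h3 := (hasSum_nat_add_iff (f := fun n : ℕ => α * (n : ℝ) * c n * t ^ n) 1).mp h2
    simp only [Finset.range_one, Finset.sum_singleton, Nat.cast_zero, mul_zero, zero_mul,
      pow_zero, mul_one, add_zero] at h3
    have h4 := h3.add (hSg t ht)
    have hfe : (fun n : ℕ => α * (n : ℝ) * c n * t ^ n + c n * t ^ n)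
        = fun n : ℕ ↦ b n * t ^ n := by
      funext n
      simp only [hbdef]
      ring
    rwa [hfe] at h4
  -- radius bounds for the two series
  have ht₁ : (0 : ℝ) < t₀ / 2 := by linarith
  have hAa : ENNReal.ofReal (t₀ / 2) ≤ (FormalMultilinearSeries.ofScalars ℝ a).radius :=
    radius_ge_of_summable a ht₁ (hSF _ hz₀).summable
  have hBb : ENNReal.ofReal (t₀ / 2) ≤ (FormalMultilinearSeries.ofScalars ℝ b).radius :=
    radius_ge_of_summable b ht₁ (hSG _ hz₀).summable
  set r1 : NNReal := (t₀ / 2).toNNReal with hr1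
  have hr1coe : (r1 : ℝ) = t₀ / 2 := Real.coe_toNNReal _ ht₁.le
  have hr1pos : (0 : ℝ≥0∞) < r1 := by
    simp only [ENNReal.coe_pos]
    exact Real.toNNReal_pos.mpr ht₁
  have hr1mem : ∀ t : ℝ, t ∈ Metric.eball (0 : ℝ) (r1 : ℝ≥0∞) →
      t ∈ EMetric.ball (0 : ℝ) (rnn : ℝ≥0∞) := by
    intro t ht
    rw [Metric.emetric_ball_nnreal, Metric.mem_ball, dist_zero_right, Real.norm_eq_abs,
      hr1coe] at ht
    exact hmem t (by linarith)
  have hFA : HasFPowerSeriesOnBall (fun t => α ^ 2 * deriv (deriv g) t)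
      (FormalMultilinearSeries.ofScalars ℝ a) 0 (r1 : ℝ≥0∞) := by
    refine ⟨?_, hr1pos, ?_⟩
    · rw [show ((r1 : ℝ≥0∞)) = ENNReal.ofReal (t₀ / 2) from rfl]
      exact hAa
    · intro yv hyv
      rw [zero_add]
      have h := hSF yv (hr1mem yv hyv)
      have hfe : (fun n : ℕ ↦ FormalMultilinearSeries.ofScalars ℝ a n fun _ ↦ yv)
          = fun n : ℕ ↦ a n * yv ^ n := by
        funext n
        rw [FormalMultilinearSeries.ofScalars_apply_eq, smul_eq_mul]
      rwa [hfe]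
  have hGB : HasFPowerSeriesOnBall (fun t => α * t * deriv g t + g t)
      (FormalMultilinearSeries.ofScalars ℝ b) 0 (r1 : ℝ≥0∞) := by
    refine ⟨?_, hr1pos, ?_⟩
    · rw [show ((r1 : ℝ≥0∞)) = ENNReal.ofReal (t₀ / 2) from rfl]
      exact hBb
    · intro yv hyv
      rw [zero_add]
      have h := hSG yv (hr1mem yv hyv)
      have hfe : (fun n : ℕ ↦ FormalMultilinearSeries.ofScalars ℝ b n fun _ ↦ yv)
          = fun n : ℕ ↦ b n * yv ^ n := by
        funext n
        rw [FormalMultilinearSeries.ofScalars_apply_eq, smul_eq_mul]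
      rwa [hfe]
  have hABeq : FormalMultilinearSeries.ofScalars ℝ a = FormalMultilinearSeries.ofScalars ℝ b :=
    hFA.hasFPowerSeriesAt.eq_formalMultilinearSeries_of_eventually hGB.hasFPowerSeriesAt hFG
  have hab : a = b := by
    rwa [FormalMultilinearSeries.ofScalars_series_eq_iff] at hABeq
  constructor
  · have h0 := congrFun hab 0
    simp only [hadef, hbdef, Nat.cast_zero] at h0
    norm_num at h0
    linarith
  · intro k hk
    have hk' := congrFun hab k
    simp only [hadef, hbdef] at hk'
    linear_combination hk'
end

section
/- Let α ∈ (0,1], let m be a real number, and let (c_k) be a real sequence such that y(x) = ∑_{k=0}^{∞} c_k x^{kα} converges on an interval (0, R) with R > 0 and satisfies the conformable fractional Hermite equation T_α T_α y − 2α x^{α} T_α y + 2α² m y = 0 on (0, R). Then c₂ = −m c₀ and c_{k+2} = 2(k − m) c_k / ((k+1)(k+2)) for every k ≥ 1. -/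
open Filter Topology

private lemma aux_analyticAt_deriv {f : ℝ → ℝ} {x : ℝ} (h : AnalyticAt ℝ f x) :
    AnalyticAt ℝ (deriv f) x :=
  (AnalyticOnNhd.deriv (s := {y | AnalyticAt ℝ f y}) (fun _ hy => hy)) x h

private lemma aux_ev_iter {f : ℝ → ℝ} {x : ℝ} (h : ∀ᶠ t in 𝓝 x, AnalyticAt ℝ f t) (n : ℕ) :
    ∀ᶠ t in 𝓝 x, AnalyticAt ℝ (iteratedDeriv n f) t := by
  induction n with
  | zero => simpa [iteratedDeriv_zero] using h
  | succ n ih =>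
    simp only [iteratedDeriv_succ]
    exact ih.mono fun t ht => aux_analyticAt_deriv ht

private lemma aux_iter_add {u v : ℝ → ℝ} {x : ℝ} (hu : ∀ᶠ t in 𝓝 x, AnalyticAt ℝ u t)
    (hv : ∀ᶠ t in 𝓝 x, AnalyticAt ℝ v t) (n : ℕ) :
    iteratedDeriv n (fun t => u t + v t) =ᶠ[𝓝 x]
      fun t => iteratedDeriv n u t + iteratedDeriv n v t := by
  induction n with
  | zero => simp [iteratedDeriv_zero]
  | succ n ih =>
    have step : iteratedDeriv (n + 1) (fun t => u t + v t) =ᶠ[𝓝 x]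
        deriv (fun t => iteratedDeriv n u t + iteratedDeriv n v t) := by
      rw [iteratedDeriv_succ]; exact ih.deriv
    refine step.trans ?_
    filter_upwards [aux_ev_iter hu n, aux_ev_iter hv n] with t htu htv
    rw [deriv_fun_add htu.differentiableAt htv.differentiableAt, ← iteratedDeriv_succ,
      ← iteratedDeriv_succ]

private lemma aux_iter_cmul {u : ℝ → ℝ} {x : ℝ} (hu : ∀ᶠ t in 𝓝 x, AnalyticAt ℝ u t)
    (a : ℝ) (n : ℕ) :
    iteratedDeriv n (fun t => a * u t) =ᶠ[𝓝 x] fun t => a * iteratedDeriv n u t := by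
  induction n with
  | zero => simp [iteratedDeriv_zero]
  | succ n ih =>
    have step : iteratedDeriv (n + 1) (fun t => a * u t) =ᶠ[𝓝 x]
        deriv (fun t => a * iteratedDeriv n u t) := by
      rw [iteratedDeriv_succ]; exact ih.deriv
    refine step.trans ?_
    filter_upwards [aux_ev_iter hu n] with t htu
    rw [deriv_const_mul a htu.differentiableAt, ← iteratedDeriv_succ]

private lemma aux_leib {f : ℝ → ℝ} {x : ℝ} (hf : ∀ᶠ t in 𝓝 x, AnalyticAt ℝ f t) (n : ℕ) :
    iteratedDeriv (n + 1) (fun t => t * f t) =ᶠ[𝓝 x]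
      fun t => ((n : ℝ) + 1) * iteratedDeriv n f t + t * iteratedDeriv (n + 1) f t := by
  induction n with
  | zero =>
    rw [iteratedDeriv_one]
    filter_upwards [hf] with t ht
    rw [deriv_fun_mul differentiableAt_fun_id ht.differentiableAt]
    simp [iteratedDeriv_one, iteratedDeriv_zero]
  | succ n ih =>
    have step : iteratedDeriv (n + 1 + 1) (fun t => t * f t) =ᶠ[𝓝 x]
        deriv (fun t => ((n : ℝ) + 1) * iteratedDeriv n f t
          + t * iteratedDeriv (n + 1) f t) := by
      rw [iteratedDeriv_succ (n := n + 1)]; exact ih.deriv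
    refine step.trans ?_
    filter_upwards [aux_ev_iter hf n, aux_ev_iter hf (n + 1)] with t htn htn1
    have hA : HasDerivAt (iteratedDeriv n f) (deriv (iteratedDeriv n f) t) t :=
      htn.differentiableAt.hasDerivAt
    have hB : HasDerivAt (iteratedDeriv (n + 1) f) (deriv (iteratedDeriv (n + 1) f) t) t :=
      htn1.differentiableAt.hasDerivAt
    have hD : HasDerivAt
        (fun s => ((n : ℝ) + 1) * iteratedDeriv n f s + s * iteratedDeriv (n + 1) f s)
        (((n : ℝ) + 1) * deriv (iteratedDeriv n f) t
          + (1 * iteratedDeriv (n + 1) f t + t * deriv (iteratedDeriv (n + 1) f) t)) t :=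
      (hA.const_mul _).add ((hasDerivAt_id t).mul hB)
    rw [hD.deriv, ← iteratedDeriv_succ, ← iteratedDeriv_succ]
    push_cast
    ring

open Filter Topology FormalMultilinearSeries

theorem stmt_6 (α : ℝ) (hα : α ∈ Set.Ioc (0:ℝ) 1) (m : ℝ) (c : ℕ → ℝ) (R : ℝ) (hR : 0 < R)
    (hconv : ∀ x : ℝ, 0 < x → x < R → Summable (fun k : ℕ => c k * x ^ ((k : ℝ) * α)))
    (y : ℝ → ℝ) (hy : y = fun x => ∑' k : ℕ, c k * x ^ ((k : ℝ) * α))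
    (T : (ℝ → ℝ) → (ℝ → ℝ)) (hT : T = fun f x => x ^ (1 - α) * deriv f x)
    (heq : ∀ x : ℝ, 0 < x → x < R →
      T (T y) x - 2 * α * x ^ α * T y x + 2 * α ^ 2 * m * y x = 0) :
    c 2 = -m * c 0 ∧
      ∀ k : ℕ, 1 ≤ k →
        c (k + 2) = 2 * ((k : ℝ) - m) * c k / (((k : ℝ) + 1) * ((k : ℝ) + 2)) := by
  obtain ⟨hα0, hα1⟩ := hα
  set ρ : ℝ := R ^ α with hρdef
  have hρ : 0 < ρ := Real.rpow_pos_of_pos hR α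
  set p : FormalMultilinearSeries ℝ ℝ ℝ := FormalMultilinearSeries.ofScalars ℝ c with hpdef
  -- radius bound
  have hrad : ENNReal.ofReal ρ ≤ p.radius := by
    apply ENNReal.le_of_forall_nnreal_lt
    intro r hr
    rcases eq_or_ne r 0 with rfl | hr0
    · simp
    have hrρ : (r : ℝ) < ρ := by
      have := (ENNReal.lt_ofReal_iff_toReal_lt (by simp)).mp hr
      simpa using this
    have hrpos : (0:ℝ) < r := by positivity
    set x : ℝ := (r : ℝ) ^ (α⁻¹) with hxdef
    have hx0 : 0 < x := Real.rpow_pos_of_pos hrpos _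
    have hxα : x ^ α = (r : ℝ) := Real.rpow_inv_rpow hrpos.le hα0.ne'
    have hxR : x < R := by
      have h1 : (r : ℝ) ^ (α⁻¹) < ρ ^ (α⁻¹) :=
        Real.rpow_lt_rpow hrpos.le hrρ (by positivity)
      rwa [hρdef, Real.rpow_rpow_inv hR.le hα0.ne'] at h1
    have hs := hconv x hx0 hxR
    have hs' : Summable (fun k : ℕ => c k * (r : ℝ) ^ k) := by
      refine hs.congr fun k => ?_
      rw [mul_comm (k:ℝ) α, Real.rpow_mul hx0.le, hxα, Real.rpow_natCast]
    have ht : Filter.Tendsto (fun n : ℕ => ‖p n‖ * (r : ℝ) ^ n) atTop (𝓝 0) := by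
      have h1 : (fun n : ℕ => ‖p n‖ * (r : ℝ) ^ n) = fun n => |c n * (r : ℝ) ^ n| := by
        funext n
        rw [hpdef, FormalMultilinearSeries.ofScalars_norm, abs_mul, Real.norm_eq_abs,
          abs_of_nonneg (by positivity : (0:ℝ) ≤ (r:ℝ) ^ n)]
      rw [h1]
      simpa using hs'.tendsto_atTop_zero.abs
    exact p.le_radius_of_tendsto ht
  have rad_pos : 0 < p.radius := lt_of_lt_of_le (ENNReal.ofReal_pos.mpr hρ) hrad
  have hball : HasFPowerSeriesOnBall p.sum p 0 p.radius :=
    p.hasFPowerSeriesOnBall rad_pos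
  set g : ℝ → ℝ := p.sum with hgdef
  set g1 : ℝ → ℝ := deriv g with hg1def
  set g2 : ℝ → ℝ := deriv g1 with hg2def
  set S : Set ℝ := EMetric.ball (0:ℝ) p.radius with hSdef
  have openS : IsOpen S := EMetric.isOpen_ball
  have memS : ∀ t : ℝ, |t| < ρ → t ∈ S := by
    intro t ht
    have : edist t 0 < ENNReal.ofReal ρ := by
      rw [edist_dist, Real.dist_eq, sub_zero]
      exact (ENNReal.ofReal_lt_ofReal_iff hρ).mpr ht
    exact EMetric.mem_ball.mpr (lt_of_lt_of_le this hrad)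
  have h0S : (0:ℝ) ∈ S := memS 0 (by simpa using hρ)
  have hgS : AnalyticOnNhd ℝ g S := by
    have := hball.analyticOnNhd
    exact this
  have hg1S : AnalyticOnNhd ℝ g1 S := hgS.deriv
  have hg2S : AnalyticOnNhd ℝ g2 S := hg1S.deriv
  -- y equals g ∘ rpow α on positives
  have hyg : ∀ x'' : ℝ, 0 < x'' → y x'' = g (x'' ^ α) := by
    intro x'' hx''
    rw [hy]
    have : g (x'' ^ α) = ∑' k : ℕ, p k (fun _ => x'' ^ α) := rfl
    rw [this]
    refine tsum_congr fun k => ?_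
    rw [hpdef, FormalMultilinearSeries.ofScalars_apply_eq, smul_eq_mul]
    congr 1
    rw [← Real.rpow_natCast (x'' ^ α) k, ← Real.rpow_mul hx''.le, mul_comm]
  have hmemα : ∀ x' : ℝ, 0 < x' → x' < R → x' ^ α ∈ S := by
    intro x' h1 h2
    refine memS _ ?_
    rw [abs_of_nonneg (Real.rpow_nonneg h1.le α)]
    exact Real.rpow_lt_rpow h1.le h2 hα0
  -- derivative of y on (0, R)
  have hderiv : ∀ x' : ℝ, 0 < x' → x' < R →
      HasDerivAt y (g1 (x' ^ α) * (α * x' ^ (α - 1))) x' := by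
    intro x' h1 h2
    have outer : HasDerivAt g (g1 (x' ^ α)) (x' ^ α) :=
      ((hgS _ (hmemα x' h1 h2)).differentiableAt).hasDerivAt
    have inner : HasDerivAt (fun s : ℝ => s ^ α) (α * x' ^ (α - 1)) x' :=
      Real.hasDerivAt_rpow_const (Or.inl h1.ne')
    have comp := outer.comp x' inner
    refine comp.congr_of_eventuallyEq ?_
    filter_upwards [isOpen_Ioi.mem_nhds h1] with s hs
    exact hyg s hs
  have hone : ∀ x' : ℝ, 0 < x' → x' ^ (1 - α) * x' ^ (α - 1) = 1 := by
    intro x' h1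
    rw [← Real.rpow_add h1]
    norm_num
  -- T y on (0, R)
  have hTdef : ∀ f : ℝ → ℝ, ∀ x' : ℝ, T f x' = x' ^ (1 - α) * deriv f x' := by
    intro f x'
    rw [hT]
  have hTy : ∀ x' : ℝ, 0 < x' → x' < R → T y x' = α * g1 (x' ^ α) := by
    intro x' h1 h2
    rw [hTdef, (hderiv x' h1 h2).deriv]
    have := hone x' h1
    calc x' ^ (1 - α) * (g1 (x' ^ α) * (α * x' ^ (α - 1)))
        = α * g1 (x' ^ α) * (x' ^ (1 - α) * x' ^ (α - 1)) := by ring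
      _ = α * g1 (x' ^ α) := by rw [this, mul_one]
  -- the key ODE for g on (0, ρ)
  have hkey : ∀ t : ℝ, 0 < t → t < ρ → g2 t - 2 * (t * g1 t) + 2 * m * g t = 0 := by
    intro t ht htρ
    set x : ℝ := t ^ (α⁻¹) with hxdef
    have hx0 : 0 < x := Real.rpow_pos_of_pos ht _
    have hxα : x ^ α = t := Real.rpow_inv_rpow ht.le hα0.ne'
    have hxR : x < R := by
      have h1 : t ^ (α⁻¹) < ρ ^ (α⁻¹) := Real.rpow_lt_rpow ht.le htρ (by positivity)
      rwa [hρdef, Real.rpow_rpow_inv hR.le hα0.ne'] at h1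
    -- derivative of T y at x
    have hg1d : HasDerivAt g1 (g2 (x ^ α)) (x ^ α) :=
      ((hg1S _ (hmemα x hx0 hxR)).differentiableAt).hasDerivAt
    have inner : HasDerivAt (fun s : ℝ => s ^ α) (α * x ^ (α - 1)) x :=
      Real.hasDerivAt_rpow_const (Or.inl hx0.ne')
    have comp : HasDerivAt (fun x' => α * g1 (x' ^ α)) (α * (g2 (x ^ α) * (α * x ^ (α - 1)))) x :=
      by have := (hg1d.comp x inner).const_mul α; exact this
    have hTev : T y =ᶠ[𝓝 x] fun x' => α * g1 (x' ^ α) := by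
      filter_upwards [isOpen_Ioo.mem_nhds (⟨hx0, hxR⟩ : x ∈ Set.Ioo 0 R)] with s hs
      exact hTy s hs.1 hs.2
    have hdTy : HasDerivAt (T y) (α * (g2 (x ^ α) * (α * x ^ (α - 1)))) x :=
      comp.congr_of_eventuallyEq hTev
    have hTTy : T (T y) x = α ^ 2 * g2 t := by
      rw [hTdef, hdTy.deriv]
      have h1 := hone x hx0
      calc x ^ (1 - α) * (α * (g2 (x ^ α) * (α * x ^ (α - 1))))
          = α ^ 2 * g2 (x ^ α) * (x ^ (1 - α) * x ^ (α - 1)) := by ring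
        _ = α ^ 2 * g2 t := by rw [h1, mul_one, hxα]
    have heqx := heq x hx0 hxR
    rw [hTTy, hTy x hx0 hxR, hyg x hx0, hxα] at heqx
    have hαne : (α : ℝ) ≠ 0 := hα0.ne'
    have : α ^ 2 * (g2 t - 2 * (t * g1 t) + 2 * m * g t) = 0 := by linear_combination heqx
    have h2 := mul_eq_zero.mp this
    rcases h2 with h2 | h2
    · exact absurd h2 (pow_ne_zero 2 hαne)
    · exact h2
  -- h and its vanishing near 0
  set h : ℝ → ℝ := fun t => g2 t + ((-2 : ℝ) * (t * g1 t) + (2 * m) * g t) with hhdef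
  have hanal : AnalyticAt ℝ h 0 := by
    exact (hg2S 0 h0S).add ((analyticAt_const.mul ((analyticAt_id).mul (hg1S 0 h0S))).add
      (analyticAt_const.mul (hgS 0 h0S)))
  have hz : ∀ᶠ t in 𝓝[>] (0:ℝ), h t = 0 := by
    have h1 : ∀ᶠ t in 𝓝[>] (0:ℝ), h t = 0 := by
      filter_upwards [Ioo_mem_nhdsGT_of_mem (⟨le_refl 0, hρ⟩ : (0:ℝ) ∈ Set.Ico 0 ρ)] with t ht
      have := hkey t ht.1 ht.2
      rw [hhdef]
      simp only
      linarith
    exact h1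
  have hez : h =ᶠ[𝓝 (0:ℝ)] 0 := by
    refine (hanal.frequently_zero_iff_eventually_zero).mp ?_
    exact (hz.frequently).filter_mono
      (nhdsWithin_mono 0 fun z hz => Set.mem_compl_singleton_iff.mpr (ne_of_gt hz))
  have hiter0 : ∀ n : ℕ, iteratedDeriv n h 0 = 0 := by
    intro n
    rw [Filter.EventuallyEq.iteratedDeriv_eq n hez]
    have hconst : ∀ nn : ℕ, iteratedDeriv nn (0 : ℝ → ℝ) = 0 := by
      intro nn
      induction nn with
      | zero => rfl
      | succ nn ih =>
        rw [iteratedDeriv_succ, ih]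
        show (deriv fun _ : ℝ => (0:ℝ)) = 0
        rw [deriv_const']
        rfl
    rw [hconst n]
    rfl
  -- Taylor coefficients of g
  have hcoe : ∀ n : ℕ, iteratedDeriv n g 0 = ((n.factorial : ℕ) : ℝ) * c n := by
    intro n
    have h1 := hball.factorial_smul (1:ℝ) n
    have h2 : p n (fun _ => (1:ℝ)) = c n := by
      rw [hpdef, FormalMultilinearSeries.ofScalars_apply_eq]
      simp
    rw [h2] at h1
    rw [iteratedDeriv_eq_iteratedFDeriv]
    rw [← h1]
    simp [nsmul_eq_mul]
  have hg1c : ∀ n : ℕ, iteratedDeriv n g1 0 = (((n + 1).factorial : ℕ) : ℝ) * c (n + 1) := by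
    intro n
    rw [hg1def, ← iteratedDeriv_succ', hcoe]
  have hg2c : ∀ n : ℕ, iteratedDeriv n g2 0 = (((n + 2).factorial : ℕ) : ℝ) * c (n + 2) := by
    intro n
    rw [hg2def, ← iteratedDeriv_succ', hg1c]
  -- eventual analyticity near 0
  have hEg : ∀ᶠ t in 𝓝 (0:ℝ), AnalyticAt ℝ g t := by
    filter_upwards [openS.mem_nhds h0S] with t ht
    exact hgS t ht
  have hEg1 : ∀ᶠ t in 𝓝 (0:ℝ), AnalyticAt ℝ g1 t := by
    filter_upwards [openS.mem_nhds h0S] with t ht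
    exact hg1S t ht
  have hEg2 : ∀ᶠ t in 𝓝 (0:ℝ), AnalyticAt ℝ g2 t := by
    filter_upwards [openS.mem_nhds h0S] with t ht
    exact hg2S t ht
  have hEmul : ∀ᶠ t in 𝓝 (0:ℝ), AnalyticAt ℝ (fun s => s * g1 s) t :=
    hEg1.mono fun t ht => (analyticAt_id).mul ht
  have hEv : ∀ᶠ t in 𝓝 (0:ℝ),
      AnalyticAt ℝ (fun s => (-2 : ℝ) * (s * g1 s) + (2 * m) * g s) t := by
    filter_upwards [hEmul, hEg] with t h1 h2
    exact (analyticAt_const.mul h1).add (analyticAt_const.mul h2)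
  -- combine: value of iterated derivatives of h at 0
  have hcomb : ∀ n : ℕ, iteratedDeriv n h 0 =
      iteratedDeriv n g2 0 + ((-2 : ℝ) * iteratedDeriv n (fun s => s * g1 s) 0
        + (2 * m) * iteratedDeriv n g 0) := by
    intro n
    have hE2 : ∀ᶠ t in 𝓝 (0:ℝ), AnalyticAt ℝ (fun s => (-2:ℝ) * (s * g1 s)) t := by
      filter_upwards [hEmul] with t ht
      exact analyticAt_const.mul ht
    have hE3 : ∀ᶠ t in 𝓝 (0:ℝ), AnalyticAt ℝ (fun s => (2 * m) * g s) t := by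
      filter_upwards [hEg] with t ht
      exact analyticAt_const.mul ht
    have e1 := (aux_iter_add hEg2 hEv n).self_of_nhds
    have e2 := (aux_iter_add hE2 hE3 n).self_of_nhds
    have e3 := (aux_iter_cmul hEmul (-2 : ℝ) n).self_of_nhds
    have e4 := (aux_iter_cmul hEg (2 * m) n).self_of_nhds
    rw [hhdef]
    simp only [e1, e2, e3, e4]
  constructor
  · -- c 2 = -m * c 0
    have h0 := hiter0 0
    rw [hcomb 0] at h0
    rw [hg2c 0, hcoe 0] at h0
    simp only [iteratedDeriv_zero] at h0
    norm_num [Nat.factorial] at h0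
    linarith
  · intro k hk
    obtain ⟨j, rfl⟩ : ∃ j : ℕ, k = j + 1 := ⟨k - 1, (Nat.succ_pred_eq_of_pos hk).symm⟩
    have h0 := hiter0 (j + 1)
    rw [hcomb (j + 1)] at h0
    have e5 := (aux_leib hEg1 j).self_of_nhds
    rw [e5] at h0
    beta_reduce at h0
    rw [hg2c (j + 1), hcoe (j + 1), hg1c j, hg1c (j + 1)] at h0
    have hfac : (((j + 1 + 2).factorial : ℕ) : ℝ) = ((j + 1 : ℕ) + 2) * ((j + 1 : ℕ) + 1) * (((j + 1).factorial : ℕ) : ℝ) := by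
      push_cast [Nat.factorial_succ]
      ring
    rw [hfac] at h0
    have hfne : (((j + 1).factorial : ℕ) : ℝ) ≠ 0 := by positivity
    push_cast at h0
    have hX : ((((j:ℝ) + 3) * ((j:ℝ) + 2) * c (j + 1 + 2) - 2 * ((j:ℝ) + 1) * c (j + 1)
        + 2 * m * c (j + 1)) * (((j + 1).factorial : ℕ) : ℝ)) = 0 := by
      linear_combination h0
    have hX2 := (mul_eq_zero.mp hX).resolve_right hfne
    have hne1' : ((j:ℝ) + 1 + 1) * ((j:ℝ) + 1 + 2) ≠ 0 := by positivity
    push_cast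
    rw [eq_div_iff hne1']
    linear_combination hX2
end

section
/- Let α ∈ (0,1] and let m be a nonnegative integer. Then the conformable fractional Hermite polynomial H_m^α(x) = H_m(x^α) satisfies the conformable fractional Hermite equation T_α T_α y − 2α x^{α} T_α y + 2α² m y = 0 for all x > 0. -/
/-- The physicists' Hermite polynomials, as real functions:
`H₀ = 1`, `H₁ x = 2 x`, `H_{m+1} x = 2 x * H_m x - 2 m * H_{m-1} x`. -/
noncomputable def hermiteP : ℕ → ℝ → ℝ
  | 0, _ => 1
  | 1, x => 2 * x
  | (m + 2), x => 2 * x * hermiteP (m + 1) x - 2 * ((m : ℝ) + 1) * hermiteP m x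

lemma hermiteP_succ (m : ℕ) (u : ℝ) :
    hermiteP (m + 1) u = 2 * u * hermiteP m u - 2 * (m : ℝ) * hermiteP (m - 1) u := by
  cases m with
  | zero => simp [hermiteP]
  | succ k => simp [hermiteP]

lemma hermite_hasDerivAt (m : ℕ) (u : ℝ) :
    HasDerivAt (hermiteP m) (2 * (m : ℝ) * hermiteP (m - 1) u) u := by
  induction m using Nat.twoStepInduction generalizing u with
  | zero =>
    have h : hermiteP 0 = fun _ : ℝ => (1 : ℝ) := by funext x; rfl
    rw [h]
    simpa using hasDerivAt_const u (1 : ℝ)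
  | one =>
    have h : hermiteP 1 = fun x : ℝ => 2 * x := by funext x; rfl
    rw [h]
    have : HasDerivAt (fun x : ℝ => 2 * x) 2 u := by
      simpa using (hasDerivAt_id u).const_mul (2 : ℝ)
    convert this using 1
    simp [hermiteP]
  | more k ih1 ih2 =>
    have h : hermiteP (k + 2) =
        fun x : ℝ => 2 * x * hermiteP (k + 1) x - 2 * ((k : ℝ) + 1) * hermiteP k x := by
      funext x; rfl
    rw [h]
    have hf : HasDerivAt (fun x : ℝ => 2 * x) 2 u := by
      simpa using (hasDerivAt_id u).const_mul (2 : ℝ)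
    have h1 := hf.mul (ih2 u)
    have h2 := (ih1 u).const_mul (2 * ((k : ℝ) + 1))
    have := h1.sub h2
    refine this.congr_deriv ?_
    rw [show (k + 2) - 1 = k + 1 from rfl, show (k + 1) - 1 = k from rfl, hermiteP_succ k u]
    push_cast
    ring

lemma hermite_ode (m : ℕ) (u : ℝ) :
    2 * (m : ℝ) * (2 * ((m - 1 : ℕ) : ℝ) * hermiteP (m - 1 - 1) u)
      - 2 * u * (2 * (m : ℝ) * hermiteP (m - 1) u)
      + 2 * (m : ℝ) * hermiteP m u = 0 := by
  match m with
  | 0 => simp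
  | 1 => norm_num [hermiteP]; ring
  | (k + 2) =>
    have h : hermiteP (k + 2) u =
        2 * u * hermiteP (k + 1) u - 2 * ((k : ℝ) + 1) * hermiteP k u := rfl
    show 2 * ((k + 2 : ℕ) : ℝ) * (2 * ((k + 1 : ℕ) : ℝ) * hermiteP k u)
      - 2 * u * (2 * ((k + 2 : ℕ) : ℝ) * hermiteP (k + 1) u)
      + 2 * ((k + 2 : ℕ) : ℝ) * hermiteP (k + 2) u = 0
    rw [h]
    push_cast
    ring

theorem stmt_7 (α : ℝ) (hα : α ∈ Set.Ioc (0:ℝ) 1) (m : ℕ)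
    (T : (ℝ → ℝ) → (ℝ → ℝ)) (hT : T = fun f x => x ^ (1 - α) * deriv f x)
    (y : ℝ → ℝ) (hy : y = fun x => hermiteP m (x ^ α)) :
    ∀ x : ℝ, 0 < x →
      T (T y) x - 2 * α * x ^ α * T y x + 2 * α ^ 2 * (m : ℝ) * y x = 0 := by
  subst hT hy
  intro x hx
  -- derivative of y at any positive point
  have key : ∀ t : ℝ, 0 < t →
      deriv (fun s : ℝ => hermiteP m (s ^ α)) t
        = 2 * (m : ℝ) * hermiteP (m - 1) (t ^ α) * (α * t ^ (α - 1)) := by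
    intro t ht
    have hg : HasDerivAt (fun s : ℝ => s ^ α) (α * t ^ (α - 1)) t :=
      Real.hasDerivAt_rpow_const (Or.inl ht.ne')
    exact ((hermite_hasDerivAt m (t ^ α)).comp t hg).deriv
  have hpow : ∀ t : ℝ, 0 < t → t ^ (1 - α) * t ^ (α - 1) = 1 := by
    intro t ht
    rw [← Real.rpow_add ht]
    norm_num
  -- T y equals a nice function near x (on positive reals)
  have heq : (fun t : ℝ => t ^ (1 - α) * deriv (fun s : ℝ => hermiteP m (s ^ α)) t)
      =ᶠ[nhds x] fun t : ℝ => α * (2 * (m : ℝ) * hermiteP (m - 1) (t ^ α)) := by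
    filter_upwards [IsOpen.mem_nhds isOpen_Ioi hx] with t ht
    have ht' : (0 : ℝ) < t := ht
    rw [key t ht']
    have := hpow t ht'
    calc t ^ (1 - α) * (2 * (m : ℝ) * hermiteP (m - 1) (t ^ α) * (α * t ^ (α - 1)))
        = (t ^ (1 - α) * t ^ (α - 1)) * (α * (2 * (m : ℝ) * hermiteP (m - 1) (t ^ α))) := by
          ring
      _ = α * (2 * (m : ℝ) * hermiteP (m - 1) (t ^ α)) := by rw [this]; ring
  -- derivative of T y at x
  have hg : HasDerivAt (fun s : ℝ => s ^ α) (α * x ^ (α - 1)) x :=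
    Real.hasDerivAt_rpow_const (Or.inl hx.ne')
  have hder2 : deriv (fun t : ℝ => t ^ (1 - α) * deriv (fun s : ℝ => hermiteP m (s ^ α)) t) x
      = α * (2 * (m : ℝ) * (2 * ((m - 1 : ℕ) : ℝ) * hermiteP (m - 1 - 1) (x ^ α)
          * (α * x ^ (α - 1)))) := by
    rw [Filter.EventuallyEq.deriv_eq heq]
    have h1 : HasDerivAt (fun t : ℝ => hermiteP (m - 1) (t ^ α))
        (2 * ((m - 1 : ℕ) : ℝ) * hermiteP (m - 1 - 1) (x ^ α) * (α * x ^ (α - 1))) x :=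
      (hermite_hasDerivAt (m - 1) (x ^ α)).comp x hg
    have h2 := (h1.const_mul (α * (2 * (m : ℝ)))).deriv
    calc deriv (fun t : ℝ => α * (2 * (m : ℝ) * hermiteP (m - 1) (t ^ α))) x
        = deriv (fun t : ℝ => α * (2 * (m : ℝ)) * hermiteP (m - 1) (t ^ α)) x := by
          congr 1; funext t; ring
      _ = _ := by rw [h2]; ring
  simp only
  rw [hder2, key x hx]
  have h1 := hpow x hx
  have hode := hermite_ode m (x ^ α)
  linear_combination α ^ 2 * hode +
    (α ^ 2 * (2 * (m : ℝ) * (2 * ((m - 1 : ℕ) : ℝ) * hermiteP (m - 1 - 1) (x ^ α)))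
      - 2 * α ^ 2 * x ^ α * (2 * (m : ℝ) * hermiteP (m - 1) (x ^ α))) * h1
end

section
/- Let α ∈ (0,1] and let m ≥ 0 be an integer. Then the m-fold conformable fractional derivative of H_m^α is the constant function 2^m · m! · α^m; that is, T_α^{(m)}(H_m^α)(x) = 2^m m! α^m for all x > 0. -/
lemma hermiteP_hasDerivAt :
    ∀ m : ℕ, ∀ x : ℝ, HasDerivAt (hermiteP (m + 1)) (2 * ((m : ℝ) + 1) * hermiteP m x) x := by
  intro m
  induction m using Nat.strong_induction_on with
  | _ m ih =>
    match m with
    | 0 =>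
      intro x
      have hfun : hermiteP 1 = fun x : ℝ => 2 * x := by
        funext y; simp [hermiteP]
      rw [hfun]
      have h2 : HasDerivAt (fun x : ℝ => 2 * x) 2 x := by
        simpa using (hasDerivAt_id x).const_mul 2
      simpa [hermiteP] using h2
    | 1 =>
      intro x
      have hfun : hermiteP 2 = fun x : ℝ => 2 * x * (2 * x) - 2 * 1 * 1 := by
        funext y; simp [hermiteP]
      rw [hfun]
      have h1 : HasDerivAt (fun x : ℝ => 2 * x) 2 x := by
        simpa using (hasDerivAt_id x).const_mul 2
      have hd := (h1.mul h1).sub_const (2 * 1 * 1 : ℝ)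
      convert hd using 1
      · rfl
      · rfl
      · rfl
      simp [hermiteP]; ring
    | (m + 2) =>
      intro x
      have ih1 := ih (m + 1) (by omega) x
      have ih0 := ih m (by omega) x
      have hfun : hermiteP (m + 3)
          = fun x : ℝ => 2 * x * hermiteP (m + 2) x - 2 * ((m : ℝ) + 2) * hermiteP (m + 1) x := by
        funext y
        show hermiteP (m + 1 + 2) y = _
        rw [hermiteP]
        push_cast; ring
      rw [hfun]
      have h1 : HasDerivAt (fun x : ℝ => 2 * x) 2 x := by
        simpa using (hasDerivAt_id x).const_mul 2
      have hih1 : HasDerivAt (hermiteP (m + 2)) (2 * (((m : ℝ) + 1) + 1) * hermiteP (m + 1) x) x := by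
        convert ih1 using 2 <;> push_cast <;> ring
      have hd := (h1.mul hih1).sub (ih0.const_mul (2 * ((m : ℝ) + 2)))
      convert hd using 1
      · rfl
      · rfl
      · rfl
      have hrec : hermiteP (m + 2) x
          = 2 * x * hermiteP (m + 1) x - 2 * ((m : ℝ) + 1) * hermiteP m x := by
        rw [hermiteP]
      push_cast
      rw [hrec]; ring

/-- The conformable derivative operator. -/
noncomputable def Tc (α : ℝ) (f : ℝ → ℝ) : ℝ → ℝ := fun x => x ^ (1 - α) * deriv f x

lemma Tc_const_mul (α c : ℝ) (f : ℝ → ℝ) :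
    Tc α (fun y => c * f y) = fun x => c * Tc α f x := by
  funext x
  simp only [Tc, deriv_const_mul_field]
  ring

lemma Tc_iter_const_mul (α c : ℝ) (f : ℝ → ℝ) (n : ℕ) :
    (Tc α)^[n] (fun y => c * f y) = fun x => c * (Tc α)^[n] f x := by
  induction n generalizing f with
  | zero => rfl
  | succ n ihn =>
    rw [Function.iterate_succ_apply, Function.iterate_succ_apply, Tc_const_mul]
    exact ihn (Tc α f)

lemma Tc_eqOn (α : ℝ) {f g : ℝ → ℝ} (h : Set.EqOn f g (Set.Ioi 0)) :
    Set.EqOn (Tc α f) (Tc α g) (Set.Ioi 0) := by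
  intro x hx
  have hev : f =ᶠ[nhds x] g :=
    Filter.eventuallyEq_of_mem (isOpen_Ioi.mem_nhds hx) h
  simp only [Tc, hev.deriv_eq]

lemma Tc_iter_eqOn (α : ℝ) {f g : ℝ → ℝ} (h : Set.EqOn f g (Set.Ioi 0)) (n : ℕ) :
    Set.EqOn ((Tc α)^[n] f) ((Tc α)^[n] g) (Set.Ioi 0) := by
  induction n generalizing f g with
  | zero => exact h
  | succ n ihn =>
    rw [Function.iterate_succ_apply, Function.iterate_succ_apply]
    exact ihn (Tc_eqOn α h)

lemma Tc_hermite (α : ℝ) (hα0 : 0 < α) (m : ℕ) :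
    Set.EqOn (Tc α (fun x : ℝ => hermiteP (m + 1) (x ^ α)))
      (fun y => (2 * ((m : ℝ) + 1) * α) * hermiteP m (y ^ α)) (Set.Ioi 0) := by
  intro x hx
  have hx0 : (0 : ℝ) < x := hx
  have hpow : HasDerivAt (fun x : ℝ => x ^ α) (α * x ^ (α - 1)) x :=
    Real.hasDerivAt_rpow_const (Or.inl hx0.ne')
  have hH := hermiteP_hasDerivAt m (x ^ α)
  have hcomp : HasDerivAt (fun x : ℝ => hermiteP (m + 1) (x ^ α))
      ((2 * ((m : ℝ) + 1) * hermiteP m (x ^ α)) * (α * x ^ (α - 1))) x :=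
    hH.comp x hpow
  have hone : x ^ (1 - α) * x ^ (α - 1) = 1 := by
    rw [← Real.rpow_add hx0]
    norm_num
  simp only [Tc, hcomp.deriv]
  calc x ^ (1 - α) * (2 * ((m : ℝ) + 1) * hermiteP m (x ^ α) * (α * x ^ (α - 1)))
      = (2 * ((m : ℝ) + 1) * α) * hermiteP m (x ^ α) * (x ^ (1 - α) * x ^ (α - 1)) := by ring
    _ = (2 * ((m : ℝ) + 1) * α) * hermiteP m (x ^ α) := by rw [hone, mul_one]

theorem stmt_9 (α : ℝ) (hα : α ∈ Set.Ioc (0:ℝ) 1) (m : ℕ) :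
    ∀ x : ℝ, 0 < x →
      ((fun f : ℝ → ℝ => fun x => x ^ (1 - α) * deriv f x)^[m]
          (fun x : ℝ => hermiteP m (x ^ α))) x
        = 2 ^ m * (Nat.factorial m : ℝ) * α ^ m := by
  obtain ⟨hα0, hα1⟩ := hα
  have hT : (fun f : ℝ → ℝ => fun x => x ^ (1 - α) * deriv f x) = Tc α := rfl
  rw [hT]
  induction m with
  | zero =>
    intro x hx
    simp [hermiteP]
  | succ m ih =>
    intro x hx
    rw [Function.iterate_succ_apply]
    have h1 := Tc_iter_eqOn α (Tc_hermite α hα0 m) m (Set.mem_Ioi.mpr hx)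
    rw [h1, Tc_iter_const_mul]
    beta_reduce
    rw [ih x hx, Nat.factorial_succ]
    push_cast
    ring
end

section
/- Let α ∈ (0,1] and let m, n ≥ 0 be integers. Then for all x > 0, T_α[x ↦ e^{−x^{2α}} T_α(H_m^α)(x)](x) · H_n^α(x) − T_α[x ↦ e^{−x^{2α}} T_α(H_n^α)(x)](x) · H_m^α(x) + 2α²(m − n) e^{−x^{2α}} H_m^α(x) H_n^α(x) = 0. -/
lemma hermiteP_rec (m : ℕ) (x : ℝ) :
    hermiteP (m + 1) x = 2 * x * hermiteP m x - 2 * (m : ℝ) * hermiteP (m - 1) x := by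
  cases m with
  | zero => simp [hermiteP]
  | succ k => simp only [hermiteP, Nat.succ_sub_one]; push_cast; ring

lemma hasDerivAt_hermiteP :
    ∀ (m : ℕ) (x : ℝ), HasDerivAt (hermiteP m) (2 * (m : ℝ) * hermiteP (m - 1) x) x
  | 0, x => by
      have h0 : hermiteP 0 = fun _ : ℝ => (1:ℝ) := by funext y; rfl
      rw [h0]
      simpa using (hasDerivAt_const x (1 : ℝ))
  | 1, x => by
      have h : HasDerivAt (fun y : ℝ => 2 * y) 2 x := by simpa using (hasDerivAt_id x).const_mul 2
      have : hermiteP 1 = fun y : ℝ => 2 * y := by funext y; rfl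
      rw [this]
      simpa [hermiteP] using h
  | (m + 2), x => by
      have h1 := hasDerivAt_hermiteP (m + 1) x
      have h0 := hasDerivAt_hermiteP m x
      have hx : HasDerivAt (fun y : ℝ => 2 * y) 2 x := by simpa using (hasDerivAt_id x).const_mul 2
      have hmul : HasDerivAt (fun y : ℝ => 2 * y * hermiteP (m + 1) y)
          (2 * hermiteP (m + 1) x + 2 * x * (2 * ((m+1 : ℕ) : ℝ) * hermiteP ((m+1) - 1) x)) x :=
        hx.mul h1
      have hc : HasDerivAt (fun y : ℝ => 2 * ((m : ℝ) + 1) * hermiteP m y)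
          (2 * ((m : ℝ) + 1) * (2 * (m : ℝ) * hermiteP (m - 1) x)) x := h0.const_mul _
      have heq : hermiteP (m + 2) = fun y : ℝ =>
          2 * y * hermiteP (m + 1) y - 2 * ((m : ℝ) + 1) * hermiteP m y := by
        funext y; rfl
      rw [heq]
      have := hmul.sub hc
      refine this.congr_deriv ?_
      have hrec := hermiteP_rec m x
      simp only [Nat.add_sub_cancel]
      push_cast
      rw [hrec]
      ring

lemma herm_ode (m : ℕ) (y : ℝ) :
    4 * (m : ℝ) * ((m - 1 : ℕ) : ℝ) * hermiteP (m - 2) y - 4 * (m : ℝ) * y * hermiteP (m - 1) y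
      = -2 * (m : ℝ) * hermiteP m y := by
  cases m with
  | zero => simp
  | succ k =>
      have := hermiteP_rec k y
      simp only [Nat.succ_sub_one]
      have h2 : (k + 1) - 2 = k - 1 := by omega
      rw [h2]
      push_cast
      rw [this]
      ring

lemma Tterm (α : ℝ) (hα : 0 < α) (m : ℕ) (x : ℝ) (hx : 0 < x) :
    x ^ (1 - α) * deriv (fun y : ℝ => Real.exp (-(y ^ (2 * α))) *
        (y ^ (1 - α) * deriv (fun z : ℝ => hermiteP m (z ^ α)) y)) x
      = -2 * α ^ 2 * (m : ℝ) * Real.exp (-(x ^ (2 * α))) * hermiteP m (x ^ α) := by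
  -- inner derivative for any y > 0
  have hinner : ∀ y : ℝ, 0 < y →
      HasDerivAt (fun z : ℝ => hermiteP m (z ^ α))
        (2 * (m : ℝ) * hermiteP (m - 1) (y ^ α) * (α * y ^ (α - 1))) y := by
    intro y hy
    exact (hasDerivAt_hermiteP m (y ^ α)).comp y (Real.hasDerivAt_rpow_const (Or.inl hy.ne'))
  -- eventual equality with the nice function
  have hev : (fun y : ℝ => Real.exp (-(y ^ (2 * α))) *
        (y ^ (1 - α) * deriv (fun z : ℝ => hermiteP m (z ^ α)) y))
      =ᶠ[nhds x] (fun y : ℝ => Real.exp (-(y ^ (2 * α))) *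
        (2 * α * (m : ℝ) * hermiteP (m - 1) (y ^ α))) := by
    filter_upwards [eventually_gt_nhds hx] with y hy
    rw [(hinner y hy).deriv]
    have hpow : y ^ (1 - α) * y ^ (α - 1) = 1 := by
      rw [← Real.rpow_add hy]
      norm_num
    congr 1
    calc y ^ (1 - α) * (2 * (m:ℝ) * hermiteP (m-1) (y ^ α) * (α * y ^ (α - 1)))
        = (y ^ (1 - α) * y ^ (α - 1)) * (2 * (m:ℝ) * hermiteP (m-1) (y ^ α) * α) := by ring
      _ = 2 * α * (m:ℝ) * hermiteP (m-1) (y ^ α) := by rw [hpow]; ring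
  rw [hev.deriv_eq]
  -- derivative of the nice function
  have hexp : HasDerivAt (fun y : ℝ => Real.exp (-(y ^ (2 * α))))
      (Real.exp (-(x ^ (2 * α))) * (-(2 * α * x ^ (2 * α - 1)))) x := by
    have h1 : HasDerivAt (fun y : ℝ => -(y ^ (2 * α))) (-(2 * α * x ^ (2 * α - 1))) x :=
      (Real.hasDerivAt_rpow_const (Or.inl hx.ne')).neg
    exact (Real.hasDerivAt_exp _).comp x h1
  have hH : HasDerivAt (fun y : ℝ => 2 * α * (m : ℝ) * hermiteP (m - 1) (y ^ α))
      (2 * α * (m : ℝ) * (2 * ((m - 1 : ℕ) : ℝ) * hermiteP (m - 1 - 1) (x ^ α) * (α * x ^ (α - 1)))) x := by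
    exact ((hasDerivAt_hermiteP (m - 1) (x ^ α)).comp x
      (Real.hasDerivAt_rpow_const (Or.inl hx.ne'))).const_mul _
  have hprod := hexp.mul hH
  rw [(show HasDerivAt (fun y : ℝ => Real.exp (-(y ^ (2 * α))) * (2 * α * (m : ℝ) * hermiteP (m - 1) (y ^ α))) _ x from hprod).deriv]
  have hpow1 : x ^ (1 - α) * x ^ (2 * α - 1) = x ^ α := by
    rw [← Real.rpow_add hx]; ring_nf
  have hpow2 : x ^ (1 - α) * x ^ (α - 1) = 1 := by
    rw [← Real.rpow_add hx]; norm_num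
  have key := herm_ode m (x ^ α)
  have h12 : m - 1 - 1 = m - 2 := by omega
  rw [h12] at *
  set e := Real.exp (-(x ^ (2 * α)))
  set A := hermiteP (m - 1) (x ^ α)
  set B := hermiteP (m - 2) (x ^ α)
  set C := hermiteP m (x ^ α)
  -- expand and use hpow1, hpow2, key
  have expand : x ^ (1 - α) *
      (e * (-(2 * α * x ^ (2 * α - 1))) * (2 * α * (m : ℝ) * A) +
        e * (2 * α * (m : ℝ) * (2 * ((m - 1 : ℕ) : ℝ) * B * (α * x ^ (α - 1)))))
      = α ^ 2 * e * ((4 * (m : ℝ) * ((m - 1 : ℕ) : ℝ) * B - 4 * (m:ℝ) * (x ^ α) * A) *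
          (x ^ (1 - α) * x ^ (α - 1)))
        + α ^ 2 * e * (4 * (m:ℝ) * A * ((x ^ α) * (x ^ (1 - α) * x ^ (α - 1)) - (x ^ (1-α) * x ^ (2*α-1)))) := by
    ring
  rw [expand, hpow1, hpow2, key]
  ring

theorem stmt_13 (α : ℝ) (hα : α ∈ Set.Ioc (0:ℝ) 1) (m n : ℕ)
    (T : (ℝ → ℝ) → (ℝ → ℝ)) (hT : T = fun f x => x ^ (1 - α) * deriv f x) :
    ∀ x : ℝ, 0 < x →
      T (fun x : ℝ => Real.exp (-(x ^ (2 * α))) *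
            T (fun x : ℝ => hermiteP m (x ^ α)) x) x * hermiteP n (x ^ α)
        - T (fun x : ℝ => Real.exp (-(x ^ (2 * α))) *
            T (fun x : ℝ => hermiteP n (x ^ α)) x) x * hermiteP m (x ^ α)
        + 2 * α ^ 2 * ((m : ℝ) - (n : ℝ)) * Real.exp (-(x ^ (2 * α))) *
            hermiteP m (x ^ α) * hermiteP n (x ^ α) = 0 := by
  subst hT
  intro x hx
  simp only []
  rw [Tterm α hα.1 m x hx, Tterm α hα.1 n x hx]
  ring
end

section
/- Let j ∈ ℕ, α = 1/(2j+1), and let m, n ≥ 0 be integers with m ≠ n. Then ∫_{−∞}^{∞} H_m^α(x) H_n^α(x) e^{−x^{2α}} |x|^{α−1} dx = 0. -/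
open MeasureTheory Polynomial Real Filter Topology

/-- The real `α`-th power for `α = 1/(2j+1)`, interpreted via the real odd root:
`sign x * |x| ^ α`. -/
noncomputable def oddRoot (α x : ℝ) : ℝ := Real.sign x * |x| ^ α

noncomputable def hPoly : ℕ → Polynomial ℝ
  | 0 => 1
  | 1 => C 2 * X
  | (m + 2) => C 2 * X * hPoly (m + 1) - C (2 * ((m : ℝ) + 1)) * hPoly m

lemma hermiteP_eq (n : ℕ) (x : ℝ) : hermiteP n x = (hPoly n).eval x := by
  induction n using Nat.strong_induction_on with
  | _ n ih =>
    match n with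
    | 0 => simp [hermiteP, hPoly]
    | 1 => simp [hermiteP, hPoly]
    | (m+2) => simp [hermiteP, hPoly, ih m (by omega), ih (m+1) (by omega)]

lemma hermiteP_succ_succ (m : ℕ) (x : ℝ) :
    hermiteP (m + 2) x = 2 * x * hermiteP (m + 1) x - 2 * ((m : ℝ) + 1) * hermiteP m x := rfl

lemma hasDerivAt_hermiteP_s14 (n : ℕ) (x : ℝ) :
    HasDerivAt (hermiteP (n + 1)) (2 * ((n : ℝ) + 1) * hermiteP n x) x := by
  induction n using Nat.strong_induction_on generalizing x with
  | _ n ih =>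
    match n with
    | 0 =>
      have h : hermiteP 1 = fun y : ℝ => 2 * y := funext fun y => rfl
      rw [h]
      simpa [hermiteP] using (hasDerivAt_id x).const_mul (2 : ℝ)
    | (m+1) =>
      have h : hermiteP (m + 2) =
          fun y : ℝ => 2 * y * hermiteP (m + 1) y - 2 * ((m : ℝ) + 1) * hermiteP m y :=
        funext fun y => rfl
      rw [h]
      have h1 : HasDerivAt (fun y : ℝ => 2 * y * hermiteP (m + 1) y)
          (2 * hermiteP (m + 1) x + 2 * x * (2 * ((m : ℝ) + 1) * hermiteP m x)) x := by
        exact (((hasDerivAt_id x).const_mul (2:ℝ)).mul (ih m (by omega) x)).congr_deriv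
          (by simp only [mul_one, id])
      have h2 : HasDerivAt (fun y : ℝ => 2 * ((m : ℝ) + 1) * hermiteP m y)
          (2 * ((m : ℝ) + 1) * deriv (hermiteP m) x) x := by
        cases m with
        | zero =>
          have h0 : hermiteP 0 = fun _ : ℝ => (1:ℝ) := funext fun y => rfl
          rw [h0]
          simpa using (hasDerivAt_const x (1:ℝ)).const_mul (2 * ((0:ℕ) + 1 : ℝ))
        | succ k =>
          exact ((ih k (by omega) x).const_mul _).congr_deriv
            (by rw [(ih k (by omega) x).deriv])
      have := h1.sub h2
      refine this.congr_deriv ?_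
      cases m with
      | zero =>
        have h0 : hermiteP 0 = fun _ : ℝ => (1:ℝ) := funext fun y => rfl
        have hd : deriv (hermiteP 0) x = 0 := by rw [h0]; simp
        rw [hd]
        simp [hermiteP]
        ring
      | succ k =>
        rw [(ih k (by omega) x).deriv, hermiteP_succ_succ]
        push_cast; ring

lemma integrable_poly_gauss (p : Polynomial ℝ) :
    Integrable (fun x : ℝ => p.eval x * Real.exp (-x^2)) := by
  induction p using Polynomial.induction_on' with
  | monomial n c =>
    have hs : (-1:ℝ) < (n:ℝ) := lt_of_lt_of_le neg_one_lt_zero (Nat.cast_nonneg n)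
    have h := integrable_rpow_mul_exp_neg_mul_sq (b := 1) one_pos hs
    simp only [Real.rpow_natCast, neg_one_mul] at h
    simpa [eval_monomial, mul_assoc] using h.const_mul c
  | add p q hp hq =>
    simpa [add_mul] using (hp.add hq :
      Integrable (fun x : ℝ => p.eval x * Real.exp (-x^2) + q.eval x * Real.exp (-x^2)))

lemma tendsto_poly_gauss_atTop (p : Polynomial ℝ) :
    Tendsto (fun x : ℝ => p.eval x * Real.exp (-x^2)) atTop (𝓝 0) := by
  have h1 := p.tendsto_div_exp_atTop
  have h2 : Tendsto (fun x : ℝ => Real.exp (x - x^2)) atTop (𝓝 0) := by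
    apply Real.tendsto_exp_atBot.comp
    refine tendsto_atBot_mono' atTop ?_ tendsto_neg_atTop_atBot
    filter_upwards [eventually_ge_atTop (2:ℝ)] with x hx
    nlinarith
  have := h1.mul h2
  rw [mul_zero] at this
  refine this.congr (fun x => ?_)
  rw [Real.exp_sub, Real.exp_neg]
  field_simp

lemma tendsto_poly_gauss_atBot (p : Polynomial ℝ) :
    Tendsto (fun x : ℝ => p.eval x * Real.exp (-x^2)) atBot (𝓝 0) := by
  have h := (tendsto_poly_gauss_atTop (p.comp (-X))).comp tendsto_neg_atBot_atTop
  refine h.congr (fun x => ?_)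
  simp [Function.comp, eval_comp, neg_neg]

lemma hasDerivAt_hermiteP_gauss (k : ℕ) (x : ℝ) :
    HasDerivAt (fun y : ℝ => hermiteP k y * Real.exp (-y^2))
      (-(hermiteP (k+1) x * Real.exp (-x^2))) x := by
  have hexp : HasDerivAt (fun y : ℝ => Real.exp (-y^2)) (-(2*x) * Real.exp (-x^2)) x := by
    have hneg : HasDerivAt (fun y : ℝ => -y^2) (-(2*x)) x := by
      exact (hasDerivAt_pow 2 x).neg.congr_deriv (by simp)
    refine ((Real.hasDerivAt_exp (-x^2)).comp x hneg).congr_deriv ?_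
    ring
  cases k with
  | zero =>
    have h0 : (fun y : ℝ => hermiteP 0 y * Real.exp (-y^2))
        = fun y : ℝ => 1 * Real.exp (-y^2) := funext fun y => rfl
    rw [h0]
    have h1 : hermiteP 1 x = 2 * x := rfl
    rw [h1]
    simpa using hexp
  | succ m =>
    have h := (hasDerivAt_hermiteP_s14 m x).mul hexp
    refine h.congr_deriv ?_
    rw [hermiteP_succ_succ]
    ring

lemma integrable_hh_gauss (a b : ℕ) :
    Integrable (fun x : ℝ => hermiteP a x * hermiteP b x * Real.exp (-x^2)) := by
  refine (integrable_poly_gauss (hPoly a * hPoly b)).congr (Eventually.of_forall fun x => ?_)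
  simp [hermiteP_eq]

lemma integral_hermiteP_gauss (b : ℕ) :
    ∫ x : ℝ, hermiteP (b+1) x * Real.exp (-x^2) = 0 := by
  have h := integral_of_hasDerivAt_of_tendsto (m := (0:ℝ)) (n := (0:ℝ))
    (fun x => hasDerivAt_hermiteP_gauss b x)
    (by
      have : Integrable (fun x : ℝ => hermiteP (b+1) x * Real.exp (-x^2)) := by
        refine (integrable_poly_gauss (hPoly (b+1))).congr (Eventually.of_forall fun x => ?_)
        simp [hermiteP_eq]
      exact this.neg)
    (by
      refine (tendsto_poly_gauss_atBot (hPoly b)).congr (fun x => ?_)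
      simp [hermiteP_eq])
    (by
      refine (tendsto_poly_gauss_atTop (hPoly b)).congr (fun x => ?_)
      simp [hermiteP_eq])
  simp only [sub_zero] at h
  rw [integral_neg] at h
  linarith

lemma key_step (a b : ℕ) :
    ∫ x : ℝ, hermiteP (a+1) x * hermiteP (b+1) x * Real.exp (-x^2) =
      2 * ((a:ℝ)+1) * ∫ x : ℝ, hermiteP a x * hermiteP b x * Real.exp (-x^2) := by
  set g : ℝ → ℝ := fun y => hermiteP (a+1) y * (hermiteP b y * Real.exp (-y^2)) with hg
  have hderiv : ∀ x : ℝ, HasDerivAt g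
      (2*((a:ℝ)+1) * hermiteP a x * hermiteP b x * Real.exp (-x^2)
        - hermiteP (a+1) x * hermiteP (b+1) x * Real.exp (-x^2)) x := by
    intro x
    have h := (hasDerivAt_hermiteP_s14 a x).mul (hasDerivAt_hermiteP_gauss b x)
    refine h.congr_deriv ?_
    ring
  have hint : Integrable (fun x : ℝ =>
      2*((a:ℝ)+1) * hermiteP a x * hermiteP b x * Real.exp (-x^2)
        - hermiteP (a+1) x * hermiteP (b+1) x * Real.exp (-x^2)) := by
    refine Integrable.sub ?_ (integrable_hh_gauss (a+1) (b+1))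
    have := (integrable_hh_gauss a b).const_mul (2*((a:ℝ)+1))
    refine this.congr (Eventually.of_forall fun x => ?_)
    ring
  have htop : Tendsto g atTop (𝓝 0) := by
    refine (tendsto_poly_gauss_atTop (hPoly (a+1) * hPoly b)).congr (fun x => ?_)
    simp [hg, hermiteP_eq]; ring
  have hbot : Tendsto g atBot (𝓝 0) := by
    refine (tendsto_poly_gauss_atBot (hPoly (a+1) * hPoly b)).congr (fun x => ?_)
    simp [hg, hermiteP_eq]; ring
  have h0 := integral_of_hasDerivAt_of_tendsto hderiv hint hbot htop
  rw [sub_zero] at h0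
  rw [integral_sub (by
      have := (integrable_hh_gauss a b).const_mul (2*((a:ℝ)+1))
      refine this.congr (Eventually.of_forall fun x => ?_); ring)
    (integrable_hh_gauss (a+1) (b+1))] at h0
  have : ∫ x : ℝ, 2*((a:ℝ)+1) * hermiteP a x * hermiteP b x * Real.exp (-x^2) =
      2*((a:ℝ)+1) * ∫ x : ℝ, hermiteP a x * hermiteP b x * Real.exp (-x^2) := by
    rw [← integral_const_mul]
    congr 1; funext x; ring
  linarith [this ▸ h0]

lemma hermite_orth (m n : ℕ) (hmn : m ≠ n) :
    ∫ x : ℝ, hermiteP m x * hermiteP n x * Real.exp (-x^2) = 0 := by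
  induction m generalizing n with
  | zero =>
    match n, hmn with
    | (b+1), _ =>
      have := integral_hermiteP_gauss b
      rw [← this]
      congr 1; funext x
      have h0 : hermiteP 0 x = 1 := rfl
      rw [h0]; ring
  | succ a ih =>
    match n with
    | 0 =>
      have := integral_hermiteP_gauss a
      rw [← this]
      congr 1; funext x
      have h0 : hermiteP 0 x = 1 := rfl
      rw [h0]; ring
    | (b+1) =>
      rw [key_step a b, ih b (by omega), mul_zero]

lemma real_sign_mul_abs (y : ℝ) : Real.sign y * |y| = y := by
  rcases lt_trichotomy y 0 with h | h | h
  · rw [Real.sign_of_neg h, abs_of_neg h]; ring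
  · subst h; simp
  · rw [Real.sign_of_pos h, abs_of_pos h, one_mul]

lemma sign_pow_odd (u : ℝ) {k : ℕ} (hk : Odd k) : Real.sign (u ^ k) = Real.sign u := by
  rcases lt_trichotomy u 0 with h | h | h
  · rw [Real.sign_of_neg h, Real.sign_of_neg (hk.pow_neg h)]
  · subst h; rw [zero_pow (by rintro rfl; simp at hk), Real.sign_zero]
  · rw [Real.sign_of_pos h, Real.sign_of_pos (pow_pos h k)]

theorem stmt_14 (j : ℕ) (α : ℝ) (hα : α = 1 / (2 * (j : ℝ) + 1))
    (m n : ℕ) (hmn : m ≠ n) :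
    ∫ x : ℝ, hermiteP m (oddRoot α x) * hermiteP n (oddRoot α x) *
        Real.exp (-(|x| ^ (2 * α))) * |x| ^ (α - 1) = 0 := by
  set k : ℕ := 2 * j + 1 with hkdef
  have hkodd : Odd k := ⟨j, by omega⟩
  have hkpos : 0 < k := by omega
  have hkR : ((k : ℕ) : ℝ) = 2 * (j : ℝ) + 1 := by simp [hkdef]
  have hkne : ((k : ℕ) : ℝ) ≠ 0 := by rw [hkR]; positivity
  have hkα : ((k : ℕ) : ℝ) * α = 1 := by rw [hα, hkR]; field_simp
  set F : ℝ → ℝ := fun x => hermiteP m (oddRoot α x) * hermiteP n (oddRoot α x) *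
      Real.exp (-(|x| ^ (2 * α))) * |x| ^ (α - 1) with hF
  set f : ℝ → ℝ := fun u => u ^ k with hf
  have hsurj : Function.Surjective f := by
    intro y
    refine ⟨Real.sign y * |y| ^ ((k : ℝ)⁻¹), ?_⟩
    have h1 : (Real.sign y * |y| ^ ((k : ℝ)⁻¹)) ^ k
        = Real.sign y ^ k * (|y| ^ ((k : ℝ)⁻¹)) ^ k := by rw [mul_pow]
    have h2 : (|y| ^ ((k : ℝ)⁻¹)) ^ k = |y| := by
      rw [← Real.rpow_natCast (|y| ^ ((k : ℝ)⁻¹)) k, ← Real.rpow_mul (abs_nonneg y),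
        inv_mul_cancel₀ hkne, Real.rpow_one]
    have h3 : Real.sign y ^ k = Real.sign y := by
      rcases lt_trichotomy y 0 with h | h | h
      · rw [Real.sign_of_neg h, hkodd.neg_one_pow]
      · subst h; rw [Real.sign_zero, zero_pow hkpos.ne']
      · rw [Real.sign_of_pos h, one_pow]
    rw [hf]
    simp only
    rw [h1, h2, h3, real_sign_mul_abs y]
  have himg : f '' Set.univ = Set.univ := by
    rw [Set.image_univ, Set.range_eq_univ]
    exact hsurj
  have hderiv : ∀ u ∈ (Set.univ : Set ℝ),
      HasDerivWithinAt f ((k : ℝ) * u ^ (k - 1)) Set.univ u :=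
    fun u _ => (hasDerivAt_pow k u).hasDerivWithinAt
  have hinj : Set.InjOn f Set.univ := (hkodd.strictMono_pow (R := ℝ)).injective.injOn
  have key := integral_image_eq_integral_abs_deriv_smul MeasurableSet.univ hderiv hinj F
  rw [himg, setIntegral_univ, setIntegral_univ] at key
  rw [key]
  have hae : ∀ᵐ u : ℝ, u ≠ 0 := by
    rw [ae_iff]
    simp only [ne_eq, not_not]
    simpa using Real.volume_singleton
  rw [integral_congr_ae (g := fun u : ℝ =>
      (k : ℝ) * (hermiteP m u * hermiteP n u * Real.exp (-u ^ 2))) ?_]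
  · rw [integral_const_mul, hermite_orth m n hmn, mul_zero]
  · filter_upwards [hae] with u hu
    have habs : (0:ℝ) < |u| := abs_pos.mpr hu
    have habsk : |u ^ k| = |u| ^ k := abs_pow u k
    have hrw : ∀ s : ℝ, |u ^ k| ^ s = |u| ^ ((k : ℝ) * s) := by
      intro s
      rw [habsk, ← Real.rpow_natCast |u| k, ← Real.rpow_mul (abs_nonneg u)]
    have hroot : oddRoot α (u ^ k) = u := by
      rw [oddRoot, sign_pow_odd u hkodd, hrw α, hkα, Real.rpow_one, real_sign_mul_abs u]
    have hexp : |u ^ k| ^ (2 * α) = u ^ 2 := by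
      rw [hrw, show (k:ℝ) * (2 * α) = 2 by rw [show (k:ℝ)*(2*α) = 2*((k:ℝ)*α) by ring, hkα, mul_one]]
      rw [show ((2:ℝ)) = ((2:ℕ):ℝ) by norm_num, Real.rpow_natCast, sq_abs]
    have hjac : |(k : ℝ) * u ^ (k - 1)| * |u ^ k| ^ (α - 1) = (k : ℝ) := by
      rw [hrw]
      have h1 : |(k : ℝ) * u ^ (k - 1)| = (k : ℝ) * |u| ^ ((k - 1 : ℕ) : ℝ) := by
        rw [Real.rpow_natCast, abs_mul, abs_pow,
          abs_of_nonneg (by positivity : (0:ℝ) ≤ (k:ℝ))]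
      rw [h1, mul_assoc, ← Real.rpow_add habs]
      have : ((k - 1 : ℕ) : ℝ) + (k : ℝ) * (α - 1) = 0 := by
        rw [Nat.cast_sub hkpos, Nat.cast_one]
        linear_combination hkα
      rw [this, Real.rpow_zero, mul_one]
    show |(k : ℝ) * u ^ (k - 1)| • F (u ^ k) = _
    rw [smul_eq_mul, hF]
    simp only
    rw [hroot, hexp]
    rw [show |(k : ℝ) * u ^ (k-1)| * (hermiteP m u * hermiteP n u * Real.exp (-u ^ 2) *
        |u ^ k| ^ (α - 1)) = (|(k : ℝ) * u ^ (k-1)| * |u ^ k| ^ (α - 1)) *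
        (hermiteP m u * hermiteP n u * Real.exp (-u ^ 2)) by ring, hjac]
end
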